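/- Let a, b, c, h ∈ ℂ with 0 ≤ Re(a) < 1 and b ≠ 1, and let V be a highest weight module over the Neveu–Schwarz algebra with highest weight vector u of highest weight (c, h). Then every linear endomorphism of V ⊗ SA'_{a,b} that commutes with all the operators L_m (m ∈ ℤ) and G_r (r ∈ Z) is a scalar multiple of the identity; that is, End(V ⊗ SA'_{a,b}) ≅ ℂ, and in particular V ⊗ SA'_{a,b} is indecomposable. -/

import Mathlib

noncomputable section

open Submodule

/-- The underlying data of a `ℤ/2`-graded complex vector space equipped with
operators `L m` (`m ∈ ℤ`) and `G k` (`k ∈ ℤ`, where `G k` represents the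
operator `G_{k+1/2}` indexed by the half-integer `k + 1/2`). -/
structure PreNSMod where
  carrier : Type
  [acg : AddCommGroup carrier]
  [mod : Module ℂ carrier]
  even : Submodule ℂ carrier
  odd : Submodule ℂ carrier
  compl : IsCompl even odd
  L : ℤ → carrier →ₗ[ℂ] carrier
  G : ℤ → carrier →ₗ[ℂ] carrier

attribute [instance] PreNSMod.acg PreNSMod.mod

/-- A Neveu–Schwarz module of central charge `c`. -/
structure NSMod (c : ℂ) extends PreNSMod where
  mapsL_even : ∀ (m : ℤ), ∀ v ∈ even, L m v ∈ even
  mapsL_odd : ∀ (m : ℤ), ∀ v ∈ odd, L m v ∈ odd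
  mapsG_even : ∀ (k : ℤ), ∀ v ∈ even, G k v ∈ odd
  mapsG_odd : ∀ (k : ℤ), ∀ v ∈ odd, G k v ∈ even
  rel_LL : ∀ (m n : ℤ) (v : carrier),
    L m (L n v) - L n (L m v)
      = ((n : ℂ) - (m : ℂ)) • L (m + n) v
        + (if m + n = 0 then (((m : ℂ) ^ 3 - (m : ℂ)) / 12) * c else 0) • v
  rel_LG : ∀ (m k : ℤ) (v : carrier),
    L m (G k v) - G k (L m v) = (((k : ℂ) + 1 / 2) - (m : ℂ) / 2) • G (m + k) v
  rel_GG : ∀ (k l : ℤ) (v : carrier),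
    G k (G l v) + G l (G k v)
      = (2 : ℂ) • L (k + l + 1) v
        - (if k + l + 1 = 0 then (1 / 3) * (((k : ℂ) + 1 / 2) ^ 2 - 1 / 4) * c else 0) • v

/-- A submodule (invariant subspace) of a Neveu–Schwarz module. -/
def NSMod.IsSubmodule {c : ℂ} (S : NSMod c) (W : Submodule ℂ S.carrier) : Prop :=
  (∀ (m : ℤ), ∀ v ∈ W, S.L m v ∈ W) ∧ (∀ (k : ℤ), ∀ v ∈ W, S.G k v ∈ W)

/-- Simplicity (irreducibility) of a Neveu–Schwarz module. -/
def NSMod.IsSimple {c : ℂ} (S : NSMod c) : Prop :=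
  (∃ v : S.carrier, v ≠ 0) ∧
    ∀ W : Submodule ℂ S.carrier, S.IsSubmodule W → W = ⊥ ∨ W = ⊤

/-- `W` is a nonzero submodule which is simple as a module (it has no invariant
subspaces other than `⊥` and itself). -/
def NSMod.IsSimpleSubmodule {c : ℂ} (S : NSMod c) (W : Submodule ℂ S.carrier) : Prop :=
  S.IsSubmodule W ∧ W ≠ ⊥ ∧
    ∀ W' : Submodule ℂ S.carrier, S.IsSubmodule W' → W' ≤ W → W' = ⊥ ∨ W' = W

/-- A homomorphism of Neveu–Schwarz modules: a linear map commuting with all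
the operators `L m` and `G k`. -/
structure NSHom {c c' : ℂ} (S : NSMod c) (T : NSMod c') where
  toFun : S.carrier →ₗ[ℂ] T.carrier
  commL : ∀ (m : ℤ) (v : S.carrier), toFun (S.L m v) = T.L m (toFun v)
  commG : ∀ (k : ℤ) (v : S.carrier), toFun (S.G k v) = T.G k (toFun v)

/-- Two Neveu–Schwarz modules are isomorphic if there is a bijective
homomorphism between them. -/
def NSIso {c c' : ℂ} (S : NSMod c) (T : NSMod c') : Prop :=
  ∃ f : NSHom S T, Function.Bijective f.toFun

/-- A realization of the intermediate series module `SA_{a,b}` inside a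
Neveu–Schwarz module `S` of central charge `0`: a basis `x j` (`j ∈ ℤ`, even)
and `y j` (`j ∈ ℤ`, representing `y_{j+1/2}`, odd) on which the operators act
by the defining formulas of `SA_{a,b}`. -/
structure SAFamily (a b : ℂ) (S : NSMod 0) where
  x : ℤ → S.carrier
  y : ℤ → S.carrier
  x_even : ∀ j : ℤ, x j ∈ S.even
  y_odd : ∀ j : ℤ, y j ∈ S.odd
  indep : LinearIndependent ℂ (Sum.elim x y)
  spans : Submodule.span ℂ (Set.range x ∪ Set.range y) = ⊤
  act_Lx : ∀ i j : ℤ, S.L i (x j) = (a + (j : ℂ) + (i : ℂ) * b) • x (i + j)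
  act_Ly : ∀ i j : ℤ,
    S.L i (y j) = (a + 1 / 2 + (j : ℂ) + (i : ℂ) * (b - 1 / 2)) • y (i + j)
  act_Gx : ∀ i j : ℤ, S.G i (x j) = y (i + j)
  act_Gy : ∀ i j : ℤ,
    S.G i (y j) = (a + 1 / 2 + (j : ℂ) + (2 * (i : ℂ) + 1) * (b - 1 / 2)) • x (i + j + 1)

/-- A realization of the intermediate series module `SA'_{a,b}` (for
`0 ≤ Re a < 1`, `b ≠ 1`) inside a Neveu–Schwarz module `S` of central
charge `0`.  For `(a,b) ≠ (1/2,1/2)` this is `SA_{a,b}` itself; for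
`(a,b) = (1/2,1/2)` it is the quotient `SA_{1/2,1/2}/ℂ·y_{-1/2}`, in which
the image of `y_{-1/2}` (here `y (-1)`) is zero and the remaining vectors
form a basis.  The action formulas hold verbatim in both cases. -/
structure SA'Family (a b : ℂ) (S : NSMod 0) where
  x : ℤ → S.carrier
  y : ℤ → S.carrier
  x_even : ∀ j : ℤ, x j ∈ S.even
  y_odd : ∀ j : ℤ, y j ∈ S.odd
  spans : Submodule.span ℂ (Set.range x ∪ Set.range y) = ⊤
  indep_special : a = 1 / 2 ∧ b = 1 / 2 →
    y (-1) = 0 ∧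
      LinearIndependent ℂ (Sum.elim x (fun j : {j : ℤ // j ≠ -1} => y j.1))
  indep_generic : ¬(a = 1 / 2 ∧ b = 1 / 2) → LinearIndependent ℂ (Sum.elim x y)
  act_Lx : ∀ i j : ℤ, S.L i (x j) = (a + (j : ℂ) + (i : ℂ) * b) • x (i + j)
  act_Ly : ∀ i j : ℤ,
    S.L i (y j) = (a + 1 / 2 + (j : ℂ) + (i : ℂ) * (b - 1 / 2)) • y (i + j)
  act_Gx : ∀ i j : ℤ, S.G i (x j) = y (i + j)
  act_Gy : ∀ i j : ℤ,
    S.G i (y j) = (a + 1 / 2 + (j : ℂ) + (2 * (i : ℂ) + 1) * (b - 1 / 2)) • x (i + j + 1)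

/-- `u` is a highest weight vector of weight `(c,h)` generating the
Neveu–Schwarz module `S` (of central charge `c`). -/
structure IsHW {c : ℂ} (h : ℂ) (S : NSMod c) (u : S.carrier) : Prop where
  ne_zero : u ≠ 0
  mem_even : u ∈ S.even
  hw0 : S.L 0 u = h • u
  hwL : ∀ n : ℤ, 1 ≤ n → S.L n u = 0
  hwG : ∀ k : ℤ, 0 ≤ k → S.G k u = 0
  gen : ∀ W : Submodule ℂ S.carrier, S.IsSubmodule W → u ∈ W → W = ⊤

/-- A realization of the tensor product Neveu–Schwarz module `V ⊗ S` (with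
`V` of central charge `c` and `S` of central charge `0`) as a Neveu–Schwarz
module `T` of central charge `c`, via the bilinear map `t`. -/
structure TensorWitness {c : ℂ} (V : NSMod c) (S : NSMod 0) (T : NSMod c) where
  t : V.carrier →ₗ[ℂ] S.carrier →ₗ[ℂ] T.carrier
  isTensor : IsTensorProduct t
  grade_ee : ∀ v ∈ V.even, ∀ w ∈ S.even, t v w ∈ T.even
  grade_oo : ∀ v ∈ V.odd, ∀ w ∈ S.odd, t v w ∈ T.even
  grade_eo : ∀ v ∈ V.even, ∀ w ∈ S.odd, t v w ∈ T.odd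
  grade_oe : ∀ v ∈ V.odd, ∀ w ∈ S.even, t v w ∈ T.odd
  actL : ∀ (m : ℤ) (v : V.carrier) (w : S.carrier),
    T.L m (t v w) = t (V.L m v) w + t v (S.L m w)
  actG_even : ∀ (k : ℤ), ∀ v ∈ V.even, ∀ w : S.carrier,
    T.G k (t v w) = t (V.G k v) w + t v (S.G k w)
  actG_odd : ∀ (k : ℤ), ∀ v ∈ V.odd, ∀ w : S.carrier,
    T.G k (t v w) = t (V.G k v) w - t v (S.G k w)

/-- The PBW monomial `L_{-n₁} ⋯ L_{-n_p} G_{-r₁} ⋯ G_{-r_q} u`, where the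
second list records each half-integer `r = k - 1/2` by the integer `k`
(so that `G_{-r}` is the operator `G (-k)`). -/
def vermaMonomial {c : ℂ} (M : NSMod c) (u : M.carrier) (p : List ℤ × List ℤ) :
    M.carrier :=
  (p.1.map fun n => M.L (-n)).foldr (fun f v => f v)
    ((p.2.map fun k => M.G (-k)).foldr (fun f v => f v) u)

/-- The index set for the PBW basis of a Verma module: weakly decreasing lists
of positive integers `n₁ ≥ ⋯ ≥ n_p ≥ 1`, together with strictly decreasing
lists of positive half-integers `r₁ > ⋯ > r_q > 0` (with `r = k - 1/2`
recorded by the integer `k ≥ 1`). -/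
def VermaIndex : Type :=
  {p : List ℤ × List ℤ //
    p.1.Chain' (· ≥ ·) ∧ (∀ n ∈ p.1, 1 ≤ n) ∧
      p.2.Chain' (· > ·) ∧ (∀ k ∈ p.2, 1 ≤ k)}

/-- `M` is the Verma module of highest weight `(c,h)` with highest weight
vector `u`: the PBW monomials in the negative-mode operators applied to `u`
form a basis of `M`. -/
def IsVerma {c : ℂ} (h : ℂ) (M : NSMod c) (u : M.carrier) : Prop :=
  IsHW h M u ∧
    LinearIndependent ℂ (fun p : VermaIndex => vermaMonomial M u p.1) ∧
    Submodule.span ℂ (Set.range fun p : VermaIndex => vermaMonomial M u p.1) = ⊤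

/-- The grading assumption on a highest weight module `V` of highest weight
`(c,h)`: `V = ⨁_{n ∈ ℕ} V_{h-n/2}` where `D n = V_{h-n/2}` is the
`L₀`-eigenspace with eigenvalue `h - n/2`, contained in the even part for
`n` even and the odd part for `n` odd, and `u ∈ D 0`. -/
structure GradedHW {c : ℂ} (h : ℂ) (V : NSMod c) (u : V.carrier)
    (D : ℕ → Submodule ℂ V.carrier) : Prop where
  hw : IsHW h V u
  u_mem : u ∈ D 0
  internal : DirectSum.IsInternal D
  eig : ∀ (n : ℕ), ∀ v ∈ D n, V.L 0 v = (h - (n : ℂ) / 2) • v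
  even_part : ∀ n : ℕ, Even n → D n ≤ V.even
  odd_part : ∀ n : ℕ, Odd n → D n ≤ V.odd

/-- A realization of the shifted module `V ⊗ ℂ[t^{±1/2}]` on the graded
vector space `Sh`.  Here `ι p v` represents `v ⊗ t^{p/2}` (half-integers
`s ∈ (1/2)ℤ` are recorded by integers `p` with `s = p/2`), and `D n` is the
weight space `V_{h - n/2}` (so `d = -n/2`).  The case distinction
`s + d ∈ ℤ` versus `s + d ∈ ℤ + 1/2` becomes `2 ∣ (p - n)` versus its
negation. -/
structure ShiftedWitness (a b : ℂ) {c : ℂ} (V : NSMod c)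
    (D : ℕ → Submodule ℂ V.carrier) (Sh : PreNSMod) where
  ι : ℤ → V.carrier →ₗ[ℂ] Sh.carrier
  directSum : Function.Bijective
    (Finsupp.lsum ℂ ι : (ℤ →₀ V.carrier) →ₗ[ℂ] Sh.carrier)
  grade_even : ∀ p : ℤ, (2 : ℤ) ∣ p → ∀ v : V.carrier, ι p v ∈ Sh.even
  grade_odd : ∀ p : ℤ, ¬(2 : ℤ) ∣ p → ∀ v : V.carrier, ι p v ∈ Sh.odd
  actL : ∀ (k p : ℤ) (n : ℕ), ∀ v ∈ D n,
    Sh.L k (ι p v) = ι (p + 2 * k) (V.L k v)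
      + (if (2 : ℤ) ∣ (p - (n : ℤ))
          then a + (p : ℂ) / 2 + (k : ℂ) * b + (n : ℂ) / 2
          else a + (p : ℂ) / 2 + (k : ℂ) * (b - 1 / 2) + (n : ℂ) / 2) •
            ι (p + 2 * k) v
  actG : ∀ (k p : ℤ) (n : ℕ), ∀ v ∈ D n,
    Sh.G k (ι p v) = ι (p + 2 * k + 1) (V.G k v)
      + ((-1 : ℂ) ^ n *
          (if (2 : ℤ) ∣ (p - (n : ℤ)) then 1
            else a + (p : ℂ) / 2 + (2 * (k : ℂ) + 1) * (b - 1 / 2) + (n : ℂ) / 2)) •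
            ι (p + 2 * k + 1) v

/-- A realization of the *reduced* shifted module: the quotient of the
shifted module `V ⊗ ℂ[t^{±1/2}]` by the copy of `V` spanned by the vectors
`v ⊗ t^{d - 1/2}` (`v ∈ V_{h+d}`) when `(a,b) = (1/2,1/2)`, and the shifted
module itself otherwise. -/
structure RedShiftedWitness (a b : ℂ) {c : ℂ} (V : NSMod c)
    (D : ℕ → Submodule ℂ V.carrier) (R : NSMod c) where
  ι : ℤ → V.carrier →ₗ[ℂ] R.carrier
  surj : Function.Surjective
    (Finsupp.lsum ℂ ι : (ℤ →₀ V.carrier) →ₗ[ℂ] R.carrier)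
  ker_special : a = 1 / 2 ∧ b = 1 / 2 →
    LinearMap.ker (Finsupp.lsum ℂ ι : (ℤ →₀ V.carrier) →ₗ[ℂ] R.carrier)
      = Submodule.span ℂ
          {w : ℤ →₀ V.carrier | ∃ n : ℕ, ∃ v ∈ D n, w = Finsupp.single (-(n : ℤ) - 1) v}
  ker_generic : ¬(a = 1 / 2 ∧ b = 1 / 2) →
    LinearMap.ker (Finsupp.lsum ℂ ι : (ℤ →₀ V.carrier) →ₗ[ℂ] R.carrier) = ⊥
  grade_even : ∀ p : ℤ, (2 : ℤ) ∣ p → ∀ v : V.carrier, ι p v ∈ R.even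
  grade_odd : ∀ p : ℤ, ¬(2 : ℤ) ∣ p → ∀ v : V.carrier, ι p v ∈ R.odd
  actL : ∀ (k p : ℤ) (n : ℕ), ∀ v ∈ D n,
    R.L k (ι p v) = ι (p + 2 * k) (V.L k v)
      + (if (2 : ℤ) ∣ (p - (n : ℤ))
          then a + (p : ℂ) / 2 + (k : ℂ) * b + (n : ℂ) / 2
          else a + (p : ℂ) / 2 + (k : ℂ) * (b - 1 / 2) + (n : ℂ) / 2) •
            ι (p + 2 * k) v
  actG : ∀ (k p : ℤ) (n : ℕ), ∀ v ∈ D n,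
    R.G k (ι p v) = ι (p + 2 * k + 1) (V.G k v)
      + ((-1 : ℂ) ^ n *
          (if (2 : ℤ) ∣ (p - (n : ℤ)) then 1
            else a + (p : ℂ) / 2 + (2 * (k : ℂ) + 1) * (b - 1 / 2) + (n : ℂ) / 2)) •
            ι (p + 2 * k + 1) v

/-- `φ` is a shifted character at level `s = p/2` on the Verma module `M`
with grading `D` and highest weight vector `u`:  `φ u = 1` and `φ` satisfies
the defining recursions on homogeneous vectors (`w ∈ D n` means
`L₀ w = (h + d) w` with `d = -n/2` and `w` of parity `n mod 2`; the operator
`G (-j)` is `G_{-r}` with `r = j - 1/2 > 0`). -/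
def IsShiftedChar (a b : ℂ) {c : ℂ} (M : NSMod c)
    (D : ℕ → Submodule ℂ M.carrier) (u : M.carrier) (p : ℤ)
    (φ : M.carrier →ₗ[ℂ] ℂ) : Prop :=
  φ u = 1 ∧
    (∀ (n : ℕ), ∀ w ∈ D n, ∀ k : ℤ, 1 ≤ k →
      φ (M.L (-k) w)
        = (if (2 : ℤ) ∣ (p - (n : ℤ))
            then -(a + (p : ℂ) / 2 + (k : ℂ) - (k : ℂ) * b + (n : ℂ) / 2)
            else -(a + (p : ℂ) / 2 + (k : ℂ) - (k : ℂ) * (b - 1 / 2) + (n : ℂ) / 2))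
          * φ w) ∧
    (∀ (n : ℕ), ∀ w ∈ D n, ∀ j : ℤ, 1 ≤ j →
      φ (M.G (-j) w)
        = (if (2 : ℤ) ∣ (p - (n : ℤ))
            then -(-1 : ℂ) ^ n *
              (a + (p : ℂ) / 2 + ((j : ℂ) - 1 / 2)
                - 2 * ((j : ℂ) - 1 / 2) * (b - 1 / 2) + (n : ℂ) / 2)
            else -(-1 : ℂ) ^ n)
          * φ w)

set_option maxHeartbeats 1000000

namespace NSProof

section Vstruct

variable {c : ℂ} (V : NSMod c) (u : V.carrier)

/-- monomials in negative modes applied to `u` -/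
inductive IsMon : ℕ → V.carrier → Prop
  | base : IsMon 0 u
  | stepL (n : ℕ) (j : ℕ) (v : V.carrier) :
      IsMon n v → IsMon (n + 2*(j+1)) (V.L (-(j+1 : ℤ)) v)
  | stepG (n : ℕ) (j : ℕ) (v : V.carrier) :
      IsMon n v → IsMon (n + (2*j+1)) (V.G (-(j+1 : ℤ)) v)

variable {V u}

lemma L0_L (n : ℤ) (v : V.carrier) :
    V.L 0 (V.L n v) = V.L n (V.L 0 v) + (n:ℂ) • V.L n v := by
  have := V.rel_LL 0 n v
  simp only [zero_add] at this
  have h2 : (if n = 0 then (((0:ℂ)) ^ 3 - ((0:ℤ):ℂ)) / 12 * c else 0) • v = 0 := by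
    split <;> simp
  rw [sub_eq_iff_eq_add] at this
  rw [this]
  push_cast
  split <;> · simp; abel

lemma L0_G (k : ℤ) (v : V.carrier) :
    V.L 0 (V.G k v) = V.G k (V.L 0 v) + ((k:ℂ) + 1/2) • V.G k v := by
  have := V.rel_LG 0 k v
  simp only [zero_add] at this
  rw [sub_eq_iff_eq_add] at this
  rw [this]
  push_cast
  simp; abel

variable {h : ℂ}

lemma isMon_eig (hu : IsHW h V u) {n : ℕ} {v : V.carrier} (hv : IsMon V u n v) :
    V.L 0 v = (h - n/2) • v := by
  induction hv with
  | base => simpa using hu.hw0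
  | stepL n j v hv ih =>
      rw [L0_L, ih, map_smul, ← add_smul]
      congr 1
      push_cast
      ring
  | stepG n j v hv ih =>
      rw [L0_G, ih, map_smul, ← add_smul]
      congr 1
      push_cast
      ring

variable (V u) in
/-- span of all monomials -/
def MSpan : Submodule ℂ V.carrier := Submodule.span ℂ {v | ∃ n, IsMon V u n v}

lemma isMon_mem {n : ℕ} {v : V.carrier} (hv : IsMon V u n v) : v ∈ MSpan V u :=
  Submodule.subset_span ⟨n, hv⟩

lemma MSpan_negL (j : ℕ) {w : V.carrier} (hw : w ∈ MSpan V u) :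
    V.L (-(j+1:ℤ)) w ∈ MSpan V u := by
  induction hw using Submodule.span_induction with
  | mem x hx => exact isMon_mem (IsMon.stepL _ j _ hx.choose_spec)
  | zero => simp
  | add x y _ _ hx hy => rw [map_add]; exact add_mem hx hy
  | smul a x _ hx => rw [map_smul]; exact Submodule.smul_mem _ _ hx

lemma MSpan_negG (j : ℕ) {w : V.carrier} (hw : w ∈ MSpan V u) :
    V.G (-(j+1:ℤ)) w ∈ MSpan V u := by
  induction hw using Submodule.span_induction with
  | mem x hx => exact isMon_mem (IsMon.stepG _ j _ hx.choose_spec)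
  | zero => simp
  | add x y _ _ hx hy => rw [map_add]; exact add_mem hx hy
  | smul a x _ hx => rw [map_smul]; exact Submodule.smul_mem _ _ hx

lemma MSpan_negL' {m : ℤ} (hm : m < 0) {w : V.carrier} (hw : w ∈ MSpan V u) :
    V.L m w ∈ MSpan V u := by
  have : m = -(((-m-1).toNat : ℤ) + 1) := by omega
  rw [this]; exact MSpan_negL _ hw

lemma MSpan_negG' {m : ℤ} (hm : m < 0) {w : V.carrier} (hw : w ∈ MSpan V u) :
    V.G m w ∈ MSpan V u := by
  have : m = -(((-m-1).toNat : ℤ) + 1) := by omega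
  rw [this]; exact MSpan_negG _ hw

lemma isMon_all (hu : IsHW h V u) {n : ℕ} {v : V.carrier} (hv : IsMon V u n v) :
    (∀ m : ℤ, V.L m v ∈ MSpan V u) ∧ (∀ k : ℤ, V.G k v ∈ MSpan V u) := by
  induction hv with
  | base =>
      constructor
      · intro m
        rcases lt_trichotomy m 0 with hm | hm | hm
        · exact MSpan_negL' hm (isMon_mem IsMon.base)
        · rw [hm, hu.hw0]; exact Submodule.smul_mem _ _ (isMon_mem IsMon.base)
        · rw [hu.hwL m hm]; simp
      · intro k
        rcases lt_or_ge k 0 with hk | hk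
        · exact MSpan_negG' hk (isMon_mem IsMon.base)
        · rw [hu.hwG k hk]; simp
  | stepL n j w hw ih =>
      have hrec : ∀ m : ℤ, V.L m (V.L (-(j+1:ℤ)) w) ∈ MSpan V u := by
        intro m
        have hc := V.rel_LL m (-(j+1:ℤ)) w
        rw [sub_eq_iff_eq_add] at hc
        rw [hc]
        refine add_mem (add_mem ?_ ?_) ?_
        · exact Submodule.smul_mem _ _ (ih.1 _)
        · exact Submodule.smul_mem _ _ (isMon_mem hw)
        · exact MSpan_negL _ (ih.1 m)
      refine ⟨hrec, ?_⟩
      intro k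
      have hc := V.rel_LG (-(j+1:ℤ)) k w
      rw [sub_eq_iff_eq_add'] at hc
      have : V.G k (V.L (-(j+1:ℤ)) w)
          = V.L (-(j+1:ℤ)) (V.G k w) - ((((k:ℂ)) + 1/2) - ((-(j+1:ℤ) : ℤ):ℂ)/2) • V.G (-(j+1:ℤ)+k) w := by
        rw [hc]; abel
      rw [this]
      refine sub_mem ?_ (Submodule.smul_mem _ _ (ih.2 _))
      exact MSpan_negL _ (ih.2 k)
  | stepG n j w hw ih =>
      constructor
      · intro m
        have hc := V.rel_LG m (-(j+1:ℤ)) w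
        rw [sub_eq_iff_eq_add] at hc
        rw [hc]
        exact add_mem (Submodule.smul_mem _ _ (ih.2 _)) (MSpan_negG _ (ih.1 m))
      · intro k
        have hc := V.rel_GG k (-(j+1:ℤ)) w
        have : V.G k (V.G (-(j+1:ℤ)) w)
            = (2:ℂ) • V.L (k + -(j+1:ℤ) + 1) w
              - (if k + -(j+1:ℤ) + 1 = 0 then 1/3 * (((k:ℂ) + 1/2)^2 - 1/4) * c else 0) • w
              - V.G (-(j+1:ℤ)) (V.G k w) := by
          exact eq_sub_iff_add_eq.mpr hc
        rw [this]
        refine sub_mem (sub_mem (Submodule.smul_mem _ _ (ih.1 _))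
          (Submodule.smul_mem _ _ (isMon_mem hw))) ?_
        exact MSpan_negG _ (ih.2 k)

lemma MSpan_eq_top (hu : IsHW h V u) : MSpan V u = ⊤ := by
  apply hu.gen
  · constructor
    · intro m w hw
      induction hw using Submodule.span_induction with
      | mem x hx => exact (isMon_all hu hx.choose_spec).1 m
      | zero => simp
      | add x y _ _ hx hy => rw [map_add]; exact add_mem hx hy
      | smul a x _ hx => rw [map_smul]; exact Submodule.smul_mem _ _ hx
    · intro k w hw
      induction hw using Submodule.span_induction with
      | mem x hx => exact (isMon_all hu hx.choose_spec).2 k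
      | zero => simp
      | add x y _ _ hx hy => rw [map_add]; exact add_mem hx hy
      | smul a x _ hx => rw [map_smul]; exact Submodule.smul_mem _ _ hx
  · exact isMon_mem IsMon.base

variable (V h) in
/-- weight spaces -/
def Dsp (n : ℕ) : Submodule ℂ V.carrier :=
  Module.End.eigenspace (V.L 0 : Module.End ℂ V.carrier) (h - (n:ℂ)/2)

lemma mem_Dsp {n : ℕ} {v : V.carrier} : v ∈ Dsp V h n ↔ V.L 0 v = (h - (n:ℂ)/2) • v :=
  Module.End.mem_eigenspace_iff

lemma inj_wt : Function.Injective (fun n : ℕ => h - (n:ℂ)/2) := by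
  intro m n hmn
  simp only [sub_right_inj] at hmn
  have : ((m:ℂ)) = n := by
    field_simp at hmn
    exact_mod_cast hmn
  exact_mod_cast this

lemma top_le_iSup_Dsp (hu : IsHW h V u) : (⊤ : Submodule ℂ V.carrier) ≤ ⨆ n : ℕ, Dsp V h n := by
  rw [← MSpan_eq_top hu]
  apply Submodule.span_le.mpr
  rintro v ⟨n, hv⟩
  exact Submodule.mem_iSup_of_mem n (mem_Dsp.mpr (isMon_eig hu hv))

lemma eig_eq_bot (hu : IsHW h V u) (lam : ℂ) (hlam : ∀ n : ℕ, lam ≠ h - (n:ℂ)/2) :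
    Module.End.eigenspace (V.L 0 : Module.End ℂ V.carrier) lam = ⊥ := by
  have hind := Module.End.eigenspaces_iSupIndep (V.L 0 : Module.End ℂ V.carrier)
  have hd := (iSupIndep_def.mp hind) lam
  refine (hd.eq_bot_of_le ?_)
  refine le_trans le_top ?_
  refine le_trans (top_le_iSup_Dsp hu) ?_
  apply iSup_le
  intro n
  exact le_iSup₂_of_le (h - (n:ℂ)/2) (fun hh => hlam n hh.symm) le_rfl

/-- key vanishing: eigenvector for weight `h + s` with `s` "positive" is zero -/
lemma eig_vanish (hu : IsHW h V u) {lam : ℂ} {v : V.carrier}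
    (hv : V.L 0 v = lam • v) (hlam : ∀ n : ℕ, lam ≠ h - (n:ℂ)/2) : v = 0 := by
  have : v ∈ Module.End.eigenspace (V.L 0 : Module.End ℂ V.carrier) lam :=
    Module.End.mem_eigenspace_iff.mpr hv
  rw [eig_eq_bot hu lam hlam] at this
  simpa using this

lemma isMon_zero {v : V.carrier} (hv : IsMon V u 0 v) : v = u := by
  generalize hn : (0:ℕ) = n at hv
  cases hv with
  | base => rfl
  | stepL n j v hv => omega
  | stepG n j v hv => omega

lemma Dn_le_span (hu : IsHW h V u) (n0 : ℕ) :
    Dsp V h n0 ≤ Submodule.span ℂ {v | IsMon V u n0 v} := by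
  classical
  set C : ℕ → Submodule ℂ V.carrier := fun n => Submodule.span ℂ {v | IsMon V u n v} with hC
  have hCD : ∀ n, C n ≤ Dsp V h n := by
    intro n
    apply Submodule.span_le.mpr
    intro v hv
    exact mem_Dsp.mpr (isMon_eig hu hv)
  have htop : (⊤ : Submodule ℂ V.carrier) ≤ ⨆ n, C n := by
    rw [← MSpan_eq_top hu]
    apply Submodule.span_le.mpr
    rintro v ⟨n, hv⟩
    exact Submodule.mem_iSup_of_mem n (Submodule.subset_span hv)
  have hsplit : (⨆ n, C n) ≤ C n0 ⊔ ⨆ (n : ℕ) (_ : n ≠ n0), C n := by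
    apply iSup_le
    intro n
    by_cases hn : n = n0
    · subst hn; exact le_sup_left
    · exact le_trans (le_iSup₂_of_le n hn le_rfl) le_sup_right
  have hDind : iSupIndep (Dsp V h) := by
    exact (Module.End.eigenspaces_iSupIndep (V.L 0 : Module.End ℂ V.carrier)).comp inj_wt
  have hdisj := (iSupIndep_def.mp hDind) n0
  have hBbot : ((⨆ (n : ℕ) (_ : n ≠ n0), C n) ⊓ Dsp V h n0) = ⊥ := by
    refine le_bot_iff.mp ?_
    refine le_trans (inf_le_inf_right _ ?_) (hdisj.symm.le_bot)
    exact iSup₂_mono fun n hn => hCD n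
  calc Dsp V h n0 = (C n0 ⊔ ⨆ (n : ℕ) (_ : n ≠ n0), C n) ⊓ Dsp V h n0 := by
        rw [inf_eq_right.mpr]
        exact le_trans le_top (le_trans htop hsplit)
    _ = C n0 ⊔ ((⨆ (n : ℕ) (_ : n ≠ n0), C n) ⊓ Dsp V h n0) := sup_inf_assoc_of_le _ (hCD n0)
    _ = C n0 := by rw [hBbot, sup_bot_eq]
    _ ≤ Submodule.span ℂ {v | IsMon V u n0 v} := le_of_eq (by rw [hC])

lemma D0_le_span (hu : IsHW h V u) : Dsp V h 0 ≤ Submodule.span ℂ {u} := by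
  refine le_trans (Dn_le_span hu 0) ?_
  apply Submodule.span_le.mpr
  intro v hv
  rw [isMon_zero hv]
  exact Submodule.subset_span rfl

lemma isMon_parity {n : ℕ} {v : V.carrier} (hu : IsHW h V u) (hv : IsMon V u n v) :
    (Even n → v ∈ V.even) ∧ (¬ Even n → v ∈ V.odd) := by
  induction hv with
  | base => exact ⟨fun _ => hu.mem_even, fun hodd => absurd (Even.zero) hodd⟩
  | stepL n j v hv ih =>
      constructor
      · intro he
        have : Even n := by
          rcases Nat.even_or_odd n with h | h
          · exact h
          · exfalso
            apply (Nat.not_even_iff_odd.mpr (by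
              rcases h with ⟨t, ht⟩
              exact ⟨t + (j+1), by omega⟩ : Odd (n + 2*(j+1)))) he
        exact V.mapsL_even _ _ (ih.1 this)
      · intro ho
        have : ¬ Even n := by
          intro he
          exact ho (by rcases he with ⟨t, ht⟩; exact ⟨t + (j+1), by omega⟩)
        exact V.mapsL_odd _ _ (ih.2 this)
  | stepG n j v hv ih =>
      constructor
      · intro he
        have : ¬ Even n := by
          intro hn
          rcases hn with ⟨t, ht⟩
          rcases he with ⟨s, hs⟩
          omega
        exact V.mapsG_odd _ _ (ih.2 this)
      · intro ho
        have : Even n := by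
          rcases Nat.even_or_odd n with hh | hh
          · exact hh
          · exfalso
            apply ho
            rcases hh with ⟨t, ht⟩
            exact ⟨t + j + 1, by omega⟩
        exact V.mapsG_even _ _ (ih.1 this)

lemma Dsp_parity_even (hu : IsHW h V u) {n : ℕ} (hn : Even n) : Dsp V h n ≤ V.even := by
  refine le_trans (Dn_le_span hu n) (Submodule.span_le.mpr ?_)
  intro v hv
  exact (isMon_parity hu hv).1 hn

lemma Dsp_parity_odd (hu : IsHW h V u) {n : ℕ} (hn : ¬ Even n) : Dsp V h n ≤ V.odd := by
  refine le_trans (Dn_le_span hu n) (Submodule.span_le.mpr ?_)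
  intro v hv
  exact (isMon_parity hu hv).2 hn

lemma D0_eq (hu : IsHW h V u) {v : V.carrier} (hv : V.L 0 v = h • v) :
    ∃ z : ℂ, v = z • u := by
  have : v ∈ Dsp V h 0 := mem_Dsp.mpr (by simpa using hv)
  have := D0_le_span hu this
  rw [Submodule.mem_span_singleton] at this
  obtain ⟨z, hz⟩ := this
  exact ⟨z, hz.symm⟩

end Vstruct

end NSProof

namespace NSProof

section Sfacts

/-- complement determination helper -/
lemma compl_det {M : Type} [AddCommGroup M] [Module ℂ M] {E O A B : Submodule ℂ M}
    (hco : IsCompl E O) (hA : A ≤ E) (hB : B ≤ O) (hAB : A ⊔ B = ⊤) :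
    E = A ∧ O = B := by
  constructor
  · refine le_antisymm ?_ hA
    intro s hs
    obtain ⟨p, hp, q, hq, hpq⟩ := Submodule.mem_sup.mp (hAB ▸ Submodule.mem_top (x := s))
    have hq0 : q = 0 := by
      have h1 : q ∈ O := hB hq
      have h2 : q ∈ E := by
        have : q = s - p := by rw [← hpq]; abel
        rw [this]
        exact sub_mem hs (hA hp)
      exact (Submodule.disjoint_def.mp hco.disjoint) q h2 h1
    rw [← hpq, hq0, add_zero]
    exact hp
  · refine le_antisymm ?_ hB
    intro s hs
    obtain ⟨p, hp, q, hq, hpq⟩ := Submodule.mem_sup.mp (hAB ▸ Submodule.mem_top (x := s))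
    have hp0 : p = 0 := by
      have h1 : p ∈ E := hA hp
      have h2 : p ∈ O := by
        have : p = s - q := by rw [← hpq]; abel
        rw [this]
        exact sub_mem hs (hB hq)
      exact (Submodule.disjoint_def.mp hco.disjoint) p h1 h2
    rw [← hpq, hp0, zero_add]
    exact hq

variable {a b : ℂ} {S : NSMod 0} (F : SA'Family a b S)

lemma y_ne_zero_generic (hg : ¬(a = 1/2 ∧ b = 1/2)) (j : ℤ) : F.y j ≠ 0 := by
  have := (F.indep_generic hg).ne_zero (Sum.inr j)
  simpa using this

lemma y_ne_zero_special (hs : a = 1/2 ∧ b = 1/2) (j : ℤ) (hj : j ≠ -1) : F.y j ≠ 0 := by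
  have := ((F.indep_special hs).2).ne_zero (Sum.inr ⟨j, hj⟩)
  simpa using this

lemma x_ne_zero (j : ℤ) : F.x j ≠ 0 := by
  by_cases hs : a = 1/2 ∧ b = 1/2
  · have := ((F.indep_special hs).2).ne_zero (Sum.inl j)
    simpa using this
  · have := (F.indep_generic hs).ne_zero (Sum.inl j)
    simpa using this

lemma S_even_eq : S.even = Submodule.span ℂ (Set.range F.x) ∧
    S.odd = Submodule.span ℂ (Set.range F.y) := by
  refine compl_det S.compl ?_ ?_ ?_
  · exact Submodule.span_le.mpr (by rintro s ⟨j, rfl⟩; exact F.x_even j)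
  · exact Submodule.span_le.mpr (by rintro s ⟨j, rfl⟩; exact F.y_odd j)
  · rw [← Submodule.span_union]
    exact F.spans

end Sfacts

section Tfacts

variable {a b : ℂ} {cc : ℂ} {V : NSMod cc} {S : NSMod 0} (F : SA'Family a b S)
  {T : NSMod cc} (tw : TensorWitness V S T)

/-- generating set of `T` -/
def TGenX : Set T.carrier := {z | ∃ v : V.carrier, ∃ j : ℤ, z = tw.t v (F.x j)}
def TGenY : Set T.carrier := {z | ∃ v : V.carrier, ∃ j : ℤ, z = tw.t v (F.y j)}

lemma t_mem_span (v : V.carrier) (s : S.carrier) :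
    tw.t v s ∈ Submodule.span ℂ (TGenX F tw ∪ TGenY F tw) := by
  have hs : s ∈ Submodule.span ℂ (Set.range F.x ∪ Set.range F.y) := by
    rw [F.spans]; trivial
  have : tw.t v s ∈ Submodule.map (tw.t v) (Submodule.span ℂ (Set.range F.x ∪ Set.range F.y)) :=
    Submodule.mem_map_of_mem hs
  rw [Submodule.map_span] at this
  refine Submodule.span_mono ?_ this
  rintro z ⟨s', hs', rfl⟩
  rcases hs' with ⟨j, rfl⟩ | ⟨j, rfl⟩
  · exact Or.inl ⟨v, j, rfl⟩
  · exact Or.inr ⟨v, j, rfl⟩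

lemma T_span_top : Submodule.span ℂ (TGenX F tw ∪ TGenY F tw) = ⊤ := by
  refine le_antisymm le_top ?_
  intro z _
  refine tw.isTensor.inductionOn z (by simp) (fun v s => t_mem_span F tw v s) ?_
  intro z₁ z₂ h1 h2
  exact add_mem h1 h2

/-- even part generators -/
def TGenE : Set T.carrier :=
  {z | ∃ v ∈ V.even, ∃ j : ℤ, z = tw.t v (F.x j)} ∪ {z | ∃ v ∈ V.odd, ∃ j : ℤ, z = tw.t v (F.y j)}
def TGenO : Set T.carrier :=
  {z | ∃ v ∈ V.odd, ∃ j : ℤ, z = tw.t v (F.x j)} ∪ {z | ∃ v ∈ V.even, ∃ j : ℤ, z = tw.t v (F.y j)}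

lemma T_parity_eq : T.even = Submodule.span ℂ (TGenE F tw) ∧
    T.odd = Submodule.span ℂ (TGenO F tw) := by
  refine compl_det T.compl ?_ ?_ ?_
  · refine Submodule.span_le.mpr ?_
    rintro z (⟨v, hv, j, rfl⟩ | ⟨v, hv, j, rfl⟩)
    · exact tw.grade_ee v hv _ (F.x_even j)
    · exact tw.grade_oo v hv _ (F.y_odd j)
  · refine Submodule.span_le.mpr ?_
    rintro z (⟨v, hv, j, rfl⟩ | ⟨v, hv, j, rfl⟩)
    · exact tw.grade_oe v hv _ (F.x_even j)
    · exact tw.grade_eo v hv _ (F.y_odd j)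
  · refine le_antisymm le_top ?_
    rw [← T_span_top F tw]
    refine Submodule.span_le.mpr ?_
    rintro z (⟨v, j, rfl⟩ | ⟨v, j, rfl⟩)
    · obtain ⟨ve, vo, hve, hvo, hsum⟩ :=
        Submodule.codisjoint_iff_exists_add_eq.mp V.compl.codisjoint v
      rw [← hsum, map_add, LinearMap.add_apply]
      refine add_mem (Submodule.mem_sup_left ?_) (Submodule.mem_sup_right ?_)
      · exact Submodule.subset_span (Or.inl ⟨_, hve, _, rfl⟩)
      · exact Submodule.subset_span (Or.inl ⟨_, hvo, _, rfl⟩)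
    · obtain ⟨ve, vo, hve, hvo, hsum⟩ :=
        Submodule.codisjoint_iff_exists_add_eq.mp V.compl.codisjoint v
      rw [← hsum, map_add, LinearMap.add_apply]
      refine add_mem (Submodule.mem_sup_right ?_) (Submodule.mem_sup_left ?_)
      · exact Submodule.subset_span (Or.inr ⟨_, hve, _, rfl⟩)
      · exact Submodule.subset_span (Or.inr ⟨_, hvo, _, rfl⟩)

end Tfacts

end NSProof

namespace NSProof

section Coord

variable {a b cc : ℂ} {V : NSMod cc} {S : NSMod 0} {F : SA'Family a b S}
  {T : NSMod cc} {tw : TensorWitness V S T}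

/-- A coordinate system for `T = V ⊗ SA'`. -/
structure CoordSys (F : SA'Family a b S) (tw : TensorWitness V S T) where
  cX : ℤ → T.carrier →ₗ[ℂ] V.carrier
  cY : ℤ → T.carrier →ₗ[ℂ] V.carrier
  cX_tx : ∀ (j i : ℤ) (v : V.carrier), cX j (tw.t v (F.x i)) = if i = j then v else 0
  cX_ty : ∀ (j i : ℤ) (v : V.carrier), cX j (tw.t v (F.y i)) = 0
  cY_tx : ∀ (j i : ℤ) (v : V.carrier), cY j (tw.t v (F.x i)) = 0
  cY_ty_eq : ∀ (j : ℤ) (v : V.carrier), F.y j ≠ 0 → cY j (tw.t v (F.y j)) = v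
  cY_ty_ne : ∀ (j i : ℤ) (v : V.carrier), i ≠ j → cY j (tw.t v (F.y i)) = 0
  cY_bad : ∀ j : ℤ, F.y j = 0 → cY j = 0
  inj : ∀ z : T.carrier, (∀ j, cX j z = 0) → (∀ j, cY j z = 0) → z = 0
  fin : ∀ z : T.carrier, Set.Finite {j : ℤ | cX j z ≠ 0 ∨ cY j z ≠ 0}

variable (tw) in
/-- bilinear coordinate map -/
def coordBil (lam : S.carrier →ₗ[ℂ] ℂ) : V.carrier →ₗ[ℂ] S.carrier →ₗ[ℂ] V.carrier :=
  LinearMap.mk₂ ℂ (fun v s => lam s • v)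
    (fun v₁ v₂ s => by simp)
    (fun r v s => by
      rw [smul_comm])
    (fun v s₁ s₂ => by simp [add_smul])
    (fun r v s => by
      simp only [map_smul, smul_eq_mul, smul_smul])

variable (tw) in
def coordMap (lam : S.carrier →ₗ[ℂ] ℂ) : T.carrier →ₗ[ℂ] V.carrier :=
  tw.isTensor.lift (coordBil lam)

lemma coordMap_t (lam : S.carrier →ₗ[ℂ] ℂ) (v : V.carrier) (s : S.carrier) :
    coordMap tw lam (tw.t v s) = lam s • v := by
  rw [coordMap, tw.isTensor.lift_eq]
  rfl

variable {ι : Type} [DecidableEq ι]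

lemma coord_key (bS : Module.Basis ι ℂ S.carrier) (w : TensorProduct ℂ V.carrier S.carrier) (i : ι) :
    ((TensorProduct.congr (LinearEquiv.refl ℂ V.carrier) bS.repr).trans
        (TensorProduct.finsuppScalarRight ℂ ℂ V.carrier ι)) w i
      = coordMap tw (bS.coord i) (tw.isTensor.equiv w) := by
  induction w with
  | zero => simp
  | tmul v s =>
      rw [IsTensorProduct.equiv_apply, TensorProduct.lift.tmul, coordMap_t]
      simp only [LinearEquiv.trans_apply, TensorProduct.congr_tmul, LinearEquiv.refl_apply]
      rw [TensorProduct.finsuppScalarRight_apply_tmul_apply]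
      rw [Module.Basis.coord_apply]
  | add w₁ w₂ h1 h2 =>
      rw [map_add, map_add, map_add, Finsupp.add_apply, h1, h2]

lemma coord_inj (bS : Module.Basis ι ℂ S.carrier) (z : T.carrier)
    (hz : ∀ i, coordMap tw (bS.coord i) z = 0) : z = 0 := by
  set e := tw.isTensor.equiv
  have : ((TensorProduct.congr (LinearEquiv.refl ℂ V.carrier) bS.repr).trans
      (TensorProduct.finsuppScalarRight ℂ ℂ V.carrier ι)) (e.symm z) = 0 := by
    ext i
    rw [coord_key bS (e.symm z) i, e.apply_symm_apply]
    exact hz i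
  have h0 : e.symm z = 0 := by
    apply_fun ((TensorProduct.congr (LinearEquiv.refl ℂ V.carrier) bS.repr).trans
      (TensorProduct.finsuppScalarRight ℂ ℂ V.carrier ι)) using LinearEquiv.injective _
    simpa using this
  apply_fun e.symm using LinearEquiv.injective _
  simpa using h0

lemma coord_fin (bS : Module.Basis ι ℂ S.carrier) (z : T.carrier) :
    Set.Finite {i : ι | coordMap tw (bS.coord i) z ≠ 0} := by
  set e := tw.isTensor.equiv
  set FF := ((TensorProduct.congr (LinearEquiv.refl ℂ V.carrier) bS.repr).trans
      (TensorProduct.finsuppScalarRight ℂ ℂ V.carrier ι)) (e.symm z) with hFF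
  refine Set.Finite.subset (FF.support.finite_toSet) ?_
  intro i hi
  simp only [Set.mem_setOf_eq] at hi
  rw [Finset.mem_coe, Finsupp.mem_support_iff, hFF]
  rw [coord_key bS (e.symm z) i, e.apply_symm_apply]
  exact hi

lemma basis_coord_eval (bS : Module.Basis ι ℂ S.carrier) (i i' : ι) :
    bS.coord i (bS i') = if i' = i then 1 else 0 := by
  rw [Module.Basis.coord_apply, Module.Basis.repr_self, Finsupp.single_apply]

lemma exists_coordSys (F : SA'Family a b S) (tw : TensorWitness V S T) :
    Nonempty (CoordSys F tw) := by
  classical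
  by_cases hs : a = 1/2 ∧ b = 1/2
  · -- special case
    set fam : ℤ ⊕ {j : ℤ // j ≠ -1} → S.carrier :=
      Sum.elim F.x (fun p => F.y p.1) with hfam
    have hindep : LinearIndependent ℂ fam := (F.indep_special hs).2
    have hy1 : F.y (-1) = 0 := (F.indep_special hs).1
    have hspan : ⊤ ≤ Submodule.span ℂ (Set.range fam) := by
      rw [← F.spans]
      refine Submodule.span_le.mpr ?_
      rintro s (⟨j, rfl⟩ | ⟨j, rfl⟩)
      · exact Submodule.subset_span ⟨Sum.inl j, rfl⟩
      · by_cases hj : j = -1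
        · rw [hj, hy1]; simp
        · exact Submodule.subset_span ⟨Sum.inr ⟨j, hj⟩, rfl⟩
    set bS : Module.Basis (ℤ ⊕ {j : ℤ // j ≠ -1}) ℂ S.carrier := Module.Basis.mk hindep hspan with hbS
    have hb_inl : ∀ j : ℤ, bS (Sum.inl j) = F.x j := fun j => by
      rw [hbS, Module.Basis.mk_apply]; rfl
    have hb_inr : ∀ p : {j : ℤ // j ≠ -1}, bS (Sum.inr p) = F.y p.1 := fun p => by
      rw [hbS, Module.Basis.mk_apply]; rfl
    refine ⟨{
      cX := fun j => coordMap tw (bS.coord (Sum.inl j))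
      cY := fun j => if hj : j = -1 then 0 else coordMap tw (bS.coord (Sum.inr ⟨j, hj⟩))
      cX_tx := ?_, cX_ty := ?_, cY_tx := ?_, cY_ty_eq := ?_, cY_ty_ne := ?_, cY_bad := ?_,
      inj := ?_, fin := ?_ }⟩
    · intro j i v
      rw [coordMap_t, ← hb_inl i, basis_coord_eval]
      by_cases hij : i = j <;> simp [hij]
    · intro j i v
      by_cases hi : i = -1
      · rw [hi, hy1]; simp
      · rw [coordMap_t, ← hb_inr ⟨i, hi⟩, basis_coord_eval]
        simp
    · intro j i v
      by_cases hj : j = -1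
      · simp [hj]
      · simp only [hj, dite_false]
        rw [coordMap_t, ← hb_inl i, basis_coord_eval]
        simp
    · intro j v hyj
      have hj : j ≠ -1 := by rintro rfl; exact hyj hy1
      simp only [hj, dite_false]
      rw [coordMap_t, ← hb_inr ⟨j, hj⟩, basis_coord_eval]
      simp
    · intro j i v hij
      by_cases hj : j = -1
      · simp [hj]
      · simp only [hj, dite_false]
        by_cases hi : i = -1
        · rw [hi, hy1]; simp
        · rw [coordMap_t, ← hb_inr ⟨i, hi⟩, basis_coord_eval]
          have : (⟨i, hi⟩ : {j : ℤ // j ≠ -1}) ≠ ⟨j, hj⟩ := by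
            simp [Subtype.ext_iff, hij]
          simp [this]
    · intro j hj
      have : j = -1 := by
        by_contra hne
        exact y_ne_zero_special F hs j hne hj
      simp [this]
    · intro z hX hY
      refine coord_inj (tw := tw) bS z ?_
      rintro (j | ⟨j, hj⟩)
      · exact hX j
      · have := hY j
        simp only [hj, dite_false] at this
        exact this
    · intro z
      refine Set.Finite.subset (Set.Finite.image (Sum.elim id Subtype.val)
        (coord_fin (tw := tw) bS z)) ?_
      intro j hj
      rcases hj with hj | hj
      · exact ⟨Sum.inl j, hj, rfl⟩
      · by_cases h1 : j = -1
        · exfalso; apply hj; simp [h1]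
        · refine ⟨Sum.inr ⟨j, h1⟩, ?_, rfl⟩
          simpa only [h1, dite_false, Set.mem_setOf_eq] using hj
  · -- generic case
    set fam : ℤ ⊕ ℤ → S.carrier := Sum.elim F.x F.y with hfam
    have hindep : LinearIndependent ℂ fam := F.indep_generic hs
    have hspan : ⊤ ≤ Submodule.span ℂ (Set.range fam) := by
      rw [← F.spans]
      refine Submodule.span_le.mpr ?_
      rintro s (⟨j, rfl⟩ | ⟨j, rfl⟩)
      · exact Submodule.subset_span ⟨Sum.inl j, rfl⟩
      · exact Submodule.subset_span ⟨Sum.inr j, rfl⟩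
    set bS : Module.Basis (ℤ ⊕ ℤ) ℂ S.carrier := Module.Basis.mk hindep hspan with hbS
    have hb_inl : ∀ j : ℤ, bS (Sum.inl j) = F.x j := fun j => by rw [hbS, Module.Basis.mk_apply]; rfl
    have hb_inr : ∀ j : ℤ, bS (Sum.inr j) = F.y j := fun j => by rw [hbS, Module.Basis.mk_apply]; rfl
    refine ⟨{
      cX := fun j => coordMap tw (bS.coord (Sum.inl j))
      cY := fun j => coordMap tw (bS.coord (Sum.inr j))
      cX_tx := ?_, cX_ty := ?_, cY_tx := ?_, cY_ty_eq := ?_, cY_ty_ne := ?_, cY_bad := ?_,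
      inj := ?_, fin := ?_ }⟩
    · intro j i v
      rw [coordMap_t, ← hb_inl i, basis_coord_eval]
      by_cases hij : i = j <;> simp [hij]
    · intro j i v
      rw [coordMap_t, ← hb_inr i, basis_coord_eval]
      simp
    · intro j i v
      rw [coordMap_t, ← hb_inl i, basis_coord_eval]
      simp
    · intro j v hyj
      rw [coordMap_t, ← hb_inr j, basis_coord_eval]
      simp
    · intro j i v hij
      rw [coordMap_t, ← hb_inr i, basis_coord_eval]
      simp [hij]
    · intro j hj
      exact absurd hj (y_ne_zero_generic F hs j)
    · intro z hX hY
      refine coord_inj (tw := tw) bS z ?_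
      rintro (j | j)
      · exact hX j
      · exact hY j
    · intro z
      refine Set.Finite.subset (Set.Finite.image (Sum.elim id id) (coord_fin (tw := tw) bS z)) ?_
      intro j hj
      rcases hj with hj | hj
      · exact ⟨Sum.inl j, hj, rfl⟩
      · exact ⟨Sum.inr j, hj, rfl⟩

end Coord

end NSProof

namespace NSProof

section Comm

variable {a b cc : ℂ} {V : NSMod cc} {S : NSMod 0} {F : SA'Family a b S}
  {T : NSMod cc} {tw : TensorWitness V S T} (C : CoordSys F tw)

lemma span_top_elim {P : T.carrier → Prop}
    (h0 : P 0) (hadd : ∀ z₁ z₂, P z₁ → P z₂ → P (z₁ + z₂))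
    (hsmul : ∀ (r : ℂ) z, P z → P (r • z))
    (hx : ∀ (v : V.carrier) (i : ℤ), P (tw.t v (F.x i)))
    (hy : ∀ (v : V.carrier) (i : ℤ), P (tw.t v (F.y i))) : ∀ z, P z := by
  intro z
  have hz : z ∈ Submodule.span ℂ (TGenX F tw ∪ TGenY F tw) := by
    rw [T_span_top F tw]; trivial
  induction hz using Submodule.span_induction with
  | mem x hxy => rcases hxy with ⟨v, i, rfl⟩ | ⟨v, i, rfl⟩
                 · exact hx v i
                 · exact hy v i
  | zero => exact h0
  | add x y _ _ h1 h2 => exact hadd x y h1 h2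
  | smul r x _ h1 => exact hsmul r x h1

lemma even_elim {P : T.carrier → Prop}
    (h0 : P 0) (hadd : ∀ z₁ z₂, P z₁ → P z₂ → P (z₁ + z₂))
    (hsmul : ∀ (r : ℂ) z, P z → P (r • z))
    (hx : ∀ v ∈ V.even, ∀ i : ℤ, P (tw.t v (F.x i)))
    (hy : ∀ v ∈ V.odd, ∀ i : ℤ, P (tw.t v (F.y i))) : ∀ z ∈ T.even, P z := by
  intro z hz
  rw [(T_parity_eq F tw).1] at hz
  induction hz using Submodule.span_induction with
  | mem x hxy => rcases hxy with ⟨v, hv, i, rfl⟩ | ⟨v, hv, i, rfl⟩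
                 · exact hx v hv i
                 · exact hy v hv i
  | zero => exact h0
  | add x y _ _ h1 h2 => exact hadd x y h1 h2
  | smul r x _ h1 => exact hsmul r x h1

lemma odd_elim {P : T.carrier → Prop}
    (h0 : P 0) (hadd : ∀ z₁ z₂, P z₁ → P z₂ → P (z₁ + z₂))
    (hsmul : ∀ (r : ℂ) z, P z → P (r • z))
    (hx : ∀ v ∈ V.odd, ∀ i : ℤ, P (tw.t v (F.x i)))
    (hy : ∀ v ∈ V.even, ∀ i : ℤ, P (tw.t v (F.y i))) : ∀ z ∈ T.odd, P z := by
  intro z hz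
  rw [(T_parity_eq F tw).2] at hz
  induction hz using Submodule.span_induction with
  | mem x hxy => rcases hxy with ⟨v, hv, i, rfl⟩ | ⟨v, hv, i, rfl⟩
                 · exact hx v hv i
                 · exact hy v hv i
  | zero => exact h0
  | add x y _ _ h1 h2 => exact hadd x y h1 h2
  | smul r x _ h1 => exact hsmul r x h1

lemma cXL (j k : ℤ) (z : T.carrier) :
    C.cX j (T.L k z) = V.L k (C.cX j z) + (a + ((j:ℂ) - (k:ℂ)) + (k:ℂ)*b) • C.cX (j-k) z := by
  revert z
  refine span_top_elim (F := F) (tw := tw) ?_ ?_ ?_ ?_ ?_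
  · simp
  · intro z₁ z₂ h1 h2
    simp only [map_add]
    rw [h1, h2, smul_add]
    abel
  · intro r z h1
    simp only [map_smul]
    rw [h1, smul_add, smul_comm r]
  · intro v i
    rw [tw.actL, F.act_Lx, map_smul, map_add, map_smul]
    simp only [C.cX_tx]
    split_ifs with hA hB hC <;> (try (exfalso; omega)) <;> (try simp) <;>
      (push_cast [show (i:ℤ) = j - k by omega]; module)
  · intro v i
    rw [tw.actL, F.act_Ly, map_smul, map_add, map_smul]
    simp only [C.cX_ty]
    simp

lemma cYL (j k : ℤ) (hyj : F.y j ≠ 0) (z : T.carrier) :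
    C.cY j (T.L k z)
      = V.L k (C.cY j z) + (a + 1/2 + ((j:ℂ) - (k:ℂ)) + (k:ℂ)*(b - 1/2)) • C.cY (j-k) z := by
  revert z
  refine span_top_elim (F := F) (tw := tw) ?_ ?_ ?_ ?_ ?_
  · simp
  · intro z₁ z₂ h1 h2
    simp only [map_add]
    rw [h1, h2, smul_add]
    abel
  · intro r z h1
    simp only [map_smul]
    rw [h1, smul_add, smul_comm r]
  · intro v i
    rw [tw.actL, F.act_Lx, map_smul, map_add, map_smul]
    simp only [C.cY_tx]
    simp
  · intro v i
    by_cases hyi : F.y i = 0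
    · rw [hyi]; simp
    · rw [tw.actL, F.act_Ly, map_smul, map_add, map_smul]
      by_cases h1 : i = j <;> by_cases h2 : k + i = j
      · have E1 : C.cY j (tw.t (V.L k v) (F.y i)) = V.L k v := by
          rw [h1]; exact C.cY_ty_eq _ _ hyj
        have E2 : C.cY j (tw.t v (F.y (k+i))) = v := by
          rw [h2]; exact C.cY_ty_eq _ _ hyj
        have E3 : C.cY j (tw.t v (F.y i)) = v := by
          rw [h1]; exact C.cY_ty_eq _ _ hyj
        have E4 : C.cY (j-k) (tw.t v (F.y i)) = v := by
          rw [show (j:ℤ)-k = i from by omega]; exact C.cY_ty_eq _ _ hyi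
        rw [E1, E2, E3, E4]
        push_cast [show (i:ℤ) = j - k from by omega]
        module
      · have E1 : C.cY j (tw.t (V.L k v) (F.y i)) = V.L k v := by
          rw [h1]; exact C.cY_ty_eq _ _ hyj
        have E2 : C.cY j (tw.t v (F.y (k+i))) = 0 := C.cY_ty_ne _ _ _ (by omega)
        have E3 : C.cY j (tw.t v (F.y i)) = v := by
          rw [h1]; exact C.cY_ty_eq _ _ hyj
        have E4 : C.cY (j-k) (tw.t v (F.y i)) = 0 := C.cY_ty_ne _ _ _ (by omega)
        rw [E1, E2, E3, E4]
        simp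
      · have E1 : C.cY j (tw.t (V.L k v) (F.y i)) = 0 := C.cY_ty_ne _ _ _ h1
        have E2 : C.cY j (tw.t v (F.y (k+i))) = v := by
          rw [h2]; exact C.cY_ty_eq _ _ hyj
        have E3 : C.cY j (tw.t v (F.y i)) = 0 := C.cY_ty_ne _ _ _ h1
        have E4 : C.cY (j-k) (tw.t v (F.y i)) = v := by
          rw [show (j:ℤ)-k = i from by omega]; exact C.cY_ty_eq _ _ hyi
        rw [E1, E2, E3, E4]
        simp only [map_zero, zero_add]
        push_cast [show (i:ℤ) = j - k from by omega]
        module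
      · have E1 : C.cY j (tw.t (V.L k v) (F.y i)) = 0 := C.cY_ty_ne _ _ _ h1
        have E2 : C.cY j (tw.t v (F.y (k+i))) = 0 := C.cY_ty_ne _ _ _ (by omega)
        have E3 : C.cY j (tw.t v (F.y i)) = 0 := C.cY_ty_ne _ _ _ h1
        have E4 : C.cY (j-k) (tw.t v (F.y i)) = 0 := C.cY_ty_ne _ _ _ (by omega)
        rw [E1, E2, E3, E4]
        simp

lemma cXGe (j k : ℤ) (z : T.carrier) (hz : z ∈ T.even) :
    C.cX j (T.G k z)
      = V.G k (C.cX j z)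
        - (a + 1/2 + ((j:ℂ) - (k:ℂ) - 1) + (2*(k:ℂ)+1)*(b - 1/2)) • C.cY (j-k-1) z := by
  revert z
  refine even_elim (F := F) (tw := tw) ?_ ?_ ?_ ?_ ?_
  · simp
  · intro z₁ z₂ h1 h2
    simp only [map_add]
    rw [h1, h2, smul_add]
    abel
  · intro r z h1
    simp only [map_smul]
    rw [h1, smul_sub, smul_comm r]
  · intro v hv i
    rw [tw.actG_even k v hv, F.act_Gx, map_add]
    simp only [C.cX_tx, C.cX_ty, C.cY_tx]
    split_ifs <;> simp
  · intro v hv i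
    by_cases hyi : F.y i = 0
    · rw [hyi]; simp
    · rw [tw.actG_odd k v hv, F.act_Gy]
      simp only [map_sub, map_smul]
      simp only [C.cX_ty, C.cX_tx]
      by_cases h2 : k + i + 1 = j
      · rw [if_pos h2, show (j:ℤ) - k - 1 = i from by omega, C.cY_ty_eq _ _ hyi]
        simp only [map_zero, zero_sub]
        push_cast [show (i:ℤ) = j - k - 1 by omega]
        module
      · rw [if_neg h2, C.cY_ty_ne _ _ _ (by omega)]
        simp

lemma cYGe (j k : ℤ) (hyj : F.y j ≠ 0) (z : T.carrier) (hz : z ∈ T.even) :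
    C.cY j (T.G k z) = V.G k (C.cY j z) + C.cX (j-k) z := by
  revert z
  refine even_elim (F := F) (tw := tw) ?_ ?_ ?_ ?_ ?_
  · simp
  · intro z₁ z₂ h1 h2
    simp only [map_add]
    rw [h1, h2]
    abel
  · intro r z h1
    simp only [map_smul]
    rw [h1, smul_add]
  · intro v hv i
    rw [tw.actG_even k v hv, F.act_Gx, map_add]
    simp only [C.cY_tx, C.cX_tx]
    by_cases h2 : k + i = j
    · rw [h2, C.cY_ty_eq _ _ hyj, if_pos (by omega : i = j - k)]
      simp
    · rw [C.cY_ty_ne _ _ _ h2, if_neg (by omega : ¬ i = j - k)]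
      simp
  · intro v hv i
    by_cases hyi : F.y i = 0
    · rw [hyi]; simp
    · rw [tw.actG_odd k v hv, F.act_Gy]
      simp only [map_sub, map_smul]
      simp only [C.cY_tx, C.cX_ty]
      by_cases h1 : i = j
      · subst h1
        rw [C.cY_ty_eq _ _ hyi, C.cY_ty_eq _ _ hyi]
        simp
      · rw [C.cY_ty_ne _ _ _ h1, C.cY_ty_ne _ _ _ h1]
        simp

lemma cXGo (j k : ℤ) (z : T.carrier) (hz : z ∈ T.odd) :
    C.cX j (T.G k z)
      = V.G k (C.cX j z)
        + (a + 1/2 + ((j:ℂ) - (k:ℂ) - 1) + (2*(k:ℂ)+1)*(b - 1/2)) • C.cY (j-k-1) z := by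
  revert z
  refine odd_elim (F := F) (tw := tw) ?_ ?_ ?_ ?_ ?_
  · simp
  · intro z₁ z₂ h1 h2
    simp only [map_add]
    rw [h1, h2, smul_add]
    abel
  · intro r z h1
    simp only [map_smul]
    rw [h1, smul_add, smul_comm r]
  · intro v hv i
    rw [tw.actG_odd k v hv, F.act_Gx, map_sub]
    simp only [C.cX_tx, C.cX_ty, C.cY_tx]
    split_ifs <;> simp
  · intro v hv i
    by_cases hyi : F.y i = 0
    · rw [hyi]; simp
    · rw [tw.actG_even k v hv, F.act_Gy]
      simp only [map_add, map_smul]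
      simp only [C.cX_ty, C.cX_tx]
      by_cases h2 : k + i + 1 = j
      · rw [if_pos h2, show (j:ℤ) - k - 1 = i from by omega, C.cY_ty_eq _ _ hyi]
        simp only [map_zero, zero_add]
        push_cast [show (i:ℤ) = j - k - 1 by omega]
        module
      · rw [if_neg h2, C.cY_ty_ne _ _ _ (by omega)]
        simp

lemma cYGo (j k : ℤ) (hyj : F.y j ≠ 0) (z : T.carrier) (hz : z ∈ T.odd) :
    C.cY j (T.G k z) = V.G k (C.cY j z) - C.cX (j-k) z := by
  revert z
  refine odd_elim (F := F) (tw := tw) ?_ ?_ ?_ ?_ ?_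
  · simp
  · intro z₁ z₂ h1 h2
    simp only [map_add]
    rw [h1, h2]
    abel
  · intro r z h1
    simp only [map_smul]
    rw [h1, smul_sub]
  · intro v hv i
    rw [tw.actG_odd k v hv, F.act_Gx, map_sub]
    simp only [C.cY_tx, C.cX_tx]
    by_cases h2 : k + i = j
    · rw [h2, C.cY_ty_eq _ _ hyj, if_pos (by omega : i = j - k)]
      simp
    · rw [C.cY_ty_ne _ _ _ h2, if_neg (by omega : ¬ i = j - k)]
      simp
  · intro v hv i
    by_cases hyi : F.y i = 0
    · rw [hyi]; simp
    · rw [tw.actG_even k v hv, F.act_Gy]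
      simp only [map_add, map_smul]
      simp only [C.cY_tx, C.cX_ty]
      by_cases h1 : i = j
      · subst h1
        rw [C.cY_ty_eq _ _ hyi, C.cY_ty_eq _ _ hyi]
        simp
      · rw [C.cY_ty_ne _ _ _ h1, C.cY_ty_ne _ _ _ h1]
        simp


end Comm

end NSProof

namespace NSProof

section Scalars

lemma cubic_diff (A p q r s t v : ℂ) :
    (A+p)*(A+q)*(A+r) - (A+s)*(A+t)*(A+v)
      = (p+q+r-s-t-v)*A^2 + (p*q+p*r+q*r-s*t-s*v-t*v)*A + (p*q*r-s*t*v) := by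
  ring

lemma three_roots {al be ga : ℂ} {x y z : ℂ} (hxy : x ≠ y) (hyz : y ≠ z) (hxz : x ≠ z)
    (hx : al*x^2 + be*x + ga = 0) (hy : al*y^2 + be*y + ga = 0)
    (hz : al*z^2 + be*z + ga = 0) : al = 0 := by
  have h1 : (x - y) * (al*(x+y) + be) = 0 := by linear_combination hx - hy
  have h2 : (y - z) * (al*(y+z) + be) = 0 := by linear_combination hy - hz
  have e1 : al*(x+y) + be = 0 := by
    rcases mul_eq_zero.mp h1 with h | h
    · exact absurd (sub_eq_zero.mp h) hxy
    · exact h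
  have e2 : al*(y+z) + be = 0 := by
    rcases mul_eq_zero.mp h2 with h | h
    · exact absurd (sub_eq_zero.mp h) hyz
    · exact h
  have h3 : al * (x - z) = 0 := by linear_combination e1 - e2
  rcases mul_eq_zero.mp h3 with h | h
  · exact h
  · exact absurd (sub_eq_zero.mp h) hxz

lemma cast_add_ne {a : ℂ} {m n : ℤ} (h : m ≠ n) : a + (m:ℂ) ≠ a + (n:ℂ) := by
  intro hc
  apply h
  have : (m:ℂ) = n := by
    have := add_left_cancel hc
    exact this
  exact_mod_cast this

lemma quad_eventually (a : ℂ) {al : ℂ} (be ga : ℂ) (hal : al ≠ 0) (m₀ : ℤ) :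
    ∃ M : ℤ, m₀ ≤ M ∧ ∀ m : ℤ, M ≤ m → al*(a+(m:ℂ))^2 + be*(a+(m:ℂ)) + ga ≠ 0 := by
  by_contra hcon
  push_neg at hcon
  obtain ⟨m₁, hm₁, hr₁⟩ := hcon m₀ le_rfl
  obtain ⟨m₂, hm₂, hr₂⟩ := hcon (m₁+1) (by omega)
  obtain ⟨m₃, hm₃, hr₃⟩ := hcon (m₂+1) (by omega)
  exact hal (three_roots (cast_add_ne (by omega)) (cast_add_ne (by omega))
    (cast_add_ne (by omega)) hr₁ hr₂ hr₃)

lemma pick3 (K kb : ℤ) (P : ℤ → Prop) [DecidablePred P]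
    (hP : ∀ k₁ k₂, P k₁ → P k₂ → k₁ = k₂) :
    ∃ k : ℤ, K ≤ k ∧ k ≠ kb ∧ ¬ P k := by
  by_cases h1 : ¬ P K ∧ K ≠ kb
  · exact ⟨K, le_rfl, h1.2, h1.1⟩
  · by_cases h2 : ¬ P (K+1) ∧ K+1 ≠ kb
    · exact ⟨K+1, by omega, h2.2, h2.1⟩
    · refine ⟨K+2, by omega, ?_, ?_⟩
      · push_neg at h1 h2
        rcases Classical.em (P K) with pK | pK
        · rcases Classical.em (P (K+1)) with pK1 | pK1
          · exact absurd (hP _ _ pK pK1) (by omega)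
          · have := h2 pK1; omega
        · have hKb := h1 pK
          rcases Classical.em (P (K+1)) with pK1 | pK1
          · omega
          · have := h2 pK1; omega
      · intro pK2
        push_neg at h1 h2
        rcases Classical.em (P K) with pK | pK
        · exact absurd (hP _ _ pK pK2) (by omega)
        · rcases Classical.em (P (K+1)) with pK1 | pK1
          · exact absurd (hP _ _ pK1 pK2) (by omega)
          · have := h1 pK; have := h2 pK1; omega

end Scalars

end NSProof

namespace NSProof

section Kill

variable {cc : ℂ} {V : NSMod cc}

/-- The abstract recursion lemma: a doubly-indexed family `w m j` satisfying the
shift recursion, finite support in `j`, and suitable nondegeneracy, vanishes at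
all offsets `≥ δk`. -/
lemma generalKill (a : ℂ) (w : ℤ → ℤ → V.carrier) (c₀ c₁ b₁ b₂ : ℂ) (δk : ℤ)
    (Bad : Set ℤ) (hBad : Bad ⊆ {(-1 : ℤ)})
    (hbadzero : ∀ (m : ℤ), ∀ j ∈ Bad, w m j = 0)
    (hfin : ∀ m : ℤ, ∃ N : ℤ, ∀ j, m + N < j → w m j = 0)
    (hrel : ∀ m k j : ℤ, 1 ≤ k → j ∉ Bad →
      (a + (m:ℂ) + c₀ + (k:ℂ)*b₁) • w (m+k) j
        = V.L k (w m j) + (a + c₁ + ((j:ℂ) - (k:ℂ)) + (k:ℂ)*b₂) • w m (j-k))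
    (hdel : ∀ δ : ℤ, δk ≤ δ → c₁ + (δ:ℂ) - c₀ ≠ 0)
    (hedge : ∀ m δ : ℤ, δk ≤ δ → b₂ = 0 → a + (m:ℂ) + c₁ + (δ:ℂ) = 0 → w m (m+δ) = 0)
    (hexc : ∀ n κ : ℤ, 2 ≤ κ → a + (n:ℂ) + c₀ + (κ:ℂ)*b₁ = 0 →
      a + (n:ℂ) + 1 + c₀ + ((κ:ℂ)-1)*b₁ = 0 → n + κ = -1) :
    ∀ m j : ℤ, m + δk ≤ j → w m j = 0 := by
  classical
  have notBad : ∀ j : ℤ, j ≠ -1 → j ∉ Bad := by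
    intro j hj hmem
    exact hj (hBad hmem)
  -- Step A : transfer of support bounds
  have stepA : ∀ m k N : ℤ, 1 ≤ k → (a + (m:ℂ) + c₀ + (k:ℂ)*b₁) ≠ 0 →
      (∀ j, m + N < j → w m j = 0) → ∀ j, m + k + N < j → w (m+k) j = 0 := by
    intro m k N hk hA hm j hj
    by_cases hjb : j ∈ Bad
    · exact hbadzero _ j hjb
    · have h := hrel m k j hk hjb
      rw [hm j (by omega), map_zero, hm (j-k) (by omega), smul_zero, zero_add] at h
      exact (smul_eq_zero.mp h).resolve_left hA
  -- Step B : uniform support bound on rows ≥ m₀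
  have stepB : ∀ m₀ : ℤ, ∃ N : ℤ, ∀ m, m₀ ≤ m → ∀ j, m + N < j → w m j = 0 := by
    intro m₀
    obtain ⟨N₀, hN₀⟩ := hfin m₀
    obtain ⟨N₁, hN₁⟩ := hfin (m₀+1)
    obtain ⟨N₂, hN₂⟩ := hfin (-1)
    refine ⟨max N₀ (max N₁ N₂), ?_⟩
    intro m hm j hj
    by_cases h0 : m = m₀
    · subst h0; exact hN₀ j (by omega)
    by_cases h1 : m = m₀ + 1
    · subst h1; exact hN₁ j (by omega)
    have hm2 : m₀ + 2 ≤ m := by omega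
    by_cases hA0 : (a + (m₀:ℂ) + c₀ + ((m - m₀ : ℤ):ℂ)*b₁) ≠ 0
    · have := stepA m₀ (m - m₀) N₀ (by omega) hA0 hN₀ j
        (by omega : m₀ + (m - m₀) + N₀ < j)
      rwa [show m₀ + (m - m₀) = m from by omega] at this
    by_cases hA1 : (a + ((m₀+1 : ℤ):ℂ) + c₀ + ((m - m₀ - 1 : ℤ):ℂ)*b₁) ≠ 0
    · have := stepA (m₀+1) (m - m₀ - 1) N₁ (by omega) hA1 hN₁ j
        (by omega : (m₀+1) + (m - m₀ - 1) + N₁ < j)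
      rwa [show (m₀+1) + (m - m₀ - 1) = m from by omega] at this
    · push_neg at hA0 hA1
      have hm1 : m = -1 := by
        have := hexc m₀ (m - m₀) (by omega) hA0 ?_
        · omega
        · have : ((m - m₀ - 1 : ℤ):ℂ) = ((m - m₀ : ℤ):ℂ) - 1 := by push_cast; ring
          rw [this] at hA1
          have h2 : ((m₀ + 1 : ℤ):ℂ) = (m₀:ℂ) + 1 := by push_cast; ring
          rw [h2] at hA1
          linear_combination hA1
      subst hm1
      exact hN₂ j (by omega)
  -- Step C : kill the top coordinate
  have stepC : ∀ m₀ N : ℤ, δk ≤ N →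
      (∀ m, m₀ ≤ m → ∀ j, m + N < j → w m j = 0) →
      ∀ m, m₀ ≤ m → w m (m+N) = 0 := by
    intro m₀ N hδN hb
    -- star relation for top coordinates
    have star : ∀ m, m₀ ≤ m → ∀ k, 1 ≤ k → (m+k+N) ∉ Bad →
        (a + (m:ℂ) + c₀ + (k:ℂ)*b₁) • w (m+k) (m+k+N)
          = (a + c₁ + (m:ℂ) + (N:ℂ) + (k:ℂ)*b₂) • w m (m+N) := by
      intro m hm k hk hnb
      have h := hrel m k (m+k+N) hk hnb
      rw [hb m hm (m+k+N) (by omega), map_zero, zero_add] at h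
      rw [show m + k + N - k = m + N from by omega] at h
      rw [show a + c₁ + (((m+k+N : ℤ):ℂ) - (k:ℂ)) + (k:ℂ)*b₂
            = a + c₁ + (m:ℂ) + (N:ℂ) + (k:ℂ)*b₂ from by push_cast; ring] at h
      exact h
    have claim1 : ∀ m, m₀ ≤ m →
        ((a + (m:ℂ) + c₀ + 2*b₁) * ((a + c₁ + (m:ℂ) + (N:ℂ) + b₂) * (a + c₁ + (m:ℂ) + 1 + (N:ℂ) + b₂))
          - (a + c₁ + (m:ℂ) + (N:ℂ) + 2*b₂) * ((a + (m:ℂ) + c₀ + b₁) * (a + (m:ℂ) + 1 + c₀ + b₁))) ≠ 0 →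
        (m+1+N) ∉ Bad → (m+2+N) ∉ Bad → w m (m+N) = 0 := by
      intro m hm hbr h1b h2b
      have e1 := star m hm 1 le_rfl (by rwa [show m + 1 + N = m + 1 + N from rfl])
      have e2 := star (m+1) (by omega) 1 le_rfl
        (by rwa [show (m+1) + 1 + N = m + 2 + N from by omega])
      have e3 := star m hm 2 (by omega) (by rwa [show m + 2 + N = m + 2 + N from rfl])
      rw [show (m+1) + 1 = m + 2 from by omega] at e2
      -- normalize coefficients
      set W0 := w m (m+N) with hW0
      set W1 := w (m+1) (m+1+N) with hW1
      set W2 := w (m+2) (m+2+N) with hW2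
      set A1 : ℂ := a + (m:ℂ) + c₀ + b₁ with hA1
      set A1' : ℂ := a + (m:ℂ) + 1 + c₀ + b₁ with hA1'
      set A2 : ℂ := a + (m:ℂ) + c₀ + 2*b₁ with hA2
      set B1 : ℂ := a + c₁ + (m:ℂ) + (N:ℂ) + b₂ with hB1
      set B1' : ℂ := a + c₁ + (m:ℂ) + 1 + (N:ℂ) + b₂ with hB1'
      set B2 : ℂ := a + c₁ + (m:ℂ) + (N:ℂ) + 2*b₂ with hB2
      have e1' : A1 • W1 = B1 • W0 := by
        rw [hA1, hB1]
        convert e1 using 2 <;> push_cast <;> ring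
      have e2' : A1' • W2 = B1' • W1 := by
        rw [hA1', hB1']
        convert e2 using 2 <;> push_cast <;> ring
      have e3' : A2 • W2 = B2 • W0 := by
        rw [hA2, hB2]
        convert e3 using 2 <;> push_cast <;> ring
      have hAA : (A1 * A1') • W2 = (B1 * B1') • W0 := by
        rw [mul_smul, e2', smul_comm, e1', smul_comm, ← mul_smul, mul_comm]
      have key : (A2 * (B1 * B1')) • W0 = (B2 * (A1 * A1')) • W0 := by
        calc (A2 * (B1 * B1')) • W0 = A2 • ((B1 * B1') • W0) := by rw [mul_smul]
          _ = A2 • ((A1 * A1') • W2) := by rw [hAA]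
          _ = (A1 * A1') • (A2 • W2) := smul_comm _ _ _
          _ = (A1 * A1') • (B2 • W0) := by rw [e3']
          _ = (B2 * (A1 * A1')) • W0 := by rw [← mul_smul, mul_comm]
      have hzero : (A2 * (B1 * B1') - B2 * (A1 * A1')) • W0 = 0 := by
        rw [sub_smul, key, sub_self]
      exact (smul_eq_zero.mp hzero).resolve_left hbr
    -- quadratic form of the bracket
    have hquad : ∀ m : ℤ,
        ((a + (m:ℂ) + c₀ + 2*b₁) * ((a + c₁ + (m:ℂ) + (N:ℂ) + b₂) * (a + c₁ + (m:ℂ) + 1 + (N:ℂ) + b₂))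
          - (a + c₁ + (m:ℂ) + (N:ℂ) + 2*b₂) * ((a + (m:ℂ) + c₀ + b₁) * (a + (m:ℂ) + 1 + c₀ + b₁)))
        = (c₁ + (N:ℂ) - c₀) * (a + (m:ℂ))^2
          + ((c₀+2*b₁)*(c₁+(N:ℂ)+b₂) + (c₀+2*b₁)*(1+c₁+(N:ℂ)+b₂) + (c₁+(N:ℂ)+b₂)*(1+c₁+(N:ℂ)+b₂)
              - (c₀+b₁)*(1+c₀+b₁) - (c₀+b₁)*(c₁+(N:ℂ)+2*b₂) - (1+c₀+b₁)*(c₁+(N:ℂ)+2*b₂)) * (a + (m:ℂ))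
          + ((c₀+2*b₁)*(c₁+(N:ℂ)+b₂)*(1+c₁+(N:ℂ)+b₂) - (c₀+b₁)*(1+c₀+b₁)*(c₁+(N:ℂ)+2*b₂)) := by
      intro m
      ring
    obtain ⟨M, hMm, hMne⟩ := quad_eventually a _ _ (hdel N hδN) m₀
    intro m hm
    by_cases hE : b₂ = 0 ∧ a + (m:ℂ) + c₁ + (N:ℂ) = 0
    · exact hedge m N hδN hE.1 hE.2
    · -- choose k
      have hP : ∀ k₁ k₂ : ℤ, (a + c₁ + (m:ℂ) + (N:ℂ) + (k₁:ℂ)*b₂ = 0) →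
          (a + c₁ + (m:ℂ) + (N:ℂ) + (k₂:ℂ)*b₂ = 0) → k₁ = k₂ := by
        intro k₁ k₂ p1 p2
        by_cases hb2 : b₂ = 0
        · exfalso
          apply hE
          refine ⟨hb2, ?_⟩
          rw [hb2] at p1
          linear_combination p1
        · have : ((k₁:ℂ) - (k₂:ℂ)) * b₂ = 0 := by linear_combination p1 - p2
          rcases mul_eq_zero.mp this with h | h
          · have : (k₁:ℂ) = (k₂:ℂ) := by linear_combination h
            exact_mod_cast this
          · exact absurd h hb2
      obtain ⟨k, hkK, hkb, hkP⟩ := pick3 (max 1 (max (M - m) ((-N) + 1 - m)))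
        (-1 - N - m) (fun k => a + c₁ + (m:ℂ) + (N:ℂ) + (k:ℂ)*b₂ = 0) hP
      have hk1 : 1 ≤ k := le_trans (le_max_left _ _) hkK
      have hkM : M ≤ m + k := by
        have := le_trans (le_trans (le_max_left _ _) (le_max_right _ _)) hkK
        omega
      have hkN : -N + 1 ≤ m + k := by
        have := le_trans (le_trans (le_max_right _ _) (le_max_right _ _)) hkK
        omega
      have hz2 : w (m+k) (m+k+N) = 0 := by
        refine claim1 (m+k) (by omega) ?_ ?_ ?_
        · rw [hquad (m+k)]
          exact hMne (m+k) hkM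
        · exact notBad _ (by omega)
        · exact notBad _ (by omega)
      have e := star m hm k hk1 (notBad _ (by omega))
      rw [hz2, smul_zero] at e
      exact ((smul_eq_zero.mp e.symm).resolve_left hkP)
  -- Step D : downward induction
  intro m j hj
  obtain ⟨N, hN⟩ := stepB m
  have main : ∀ d : ℕ, ∀ m', m ≤ m' → ∀ j', m' + max (N - (d:ℤ)) (δk - 1) < j' → w m' j' = 0 := by
    intro d
    induction d with
    | zero =>
        intro m' hm' j' hj'
        refine hN m' hm' j' ?_
        have := le_max_left (N - (0:ℤ)) (δk - 1)
        omega
    | succ d ih =>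
        intro m' hm' j' hj'
        by_cases hcase : N - (d:ℤ) ≤ δk - 1
        · refine ih m' hm' j' ?_
          have h1 : max (N - (d:ℤ)) (δk - 1) = δk - 1 := max_eq_right (by omega)
          have h2 : (((d:ℕ)+1 : ℕ) : ℤ) = (d:ℤ) + 1 := by push_cast; ring
          rw [h2] at hj'
          have h3 : max (N - ((d:ℤ)+1)) (δk - 1) = δk - 1 := max_eq_right (by omega)
          omega
        · push_neg at hcase
          have hbd : ∀ m'', m ≤ m'' → ∀ j'', m'' + (N - (d:ℤ)) < j'' → w m'' j'' = 0 := by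
            intro m'' hm'' j'' hj''
            refine ih m'' hm'' j'' ?_
            have : max (N - (d:ℤ)) (δk - 1) = N - (d:ℤ) := max_eq_left (by omega)
            omega
          have htop := stepC m (N - (d:ℤ)) (by omega) hbd
          have h2 : (((d:ℕ)+1 : ℕ) : ℤ) = (d:ℤ) + 1 := by push_cast; ring
          rw [h2] at hj'
          have hj'' : m' + (N - (d:ℤ) - 1) < j' := by
            have h4 : max (N - ((d:ℤ)+1)) (δk - 1) = N - ((d:ℤ)+1) := max_eq_left (by omega)
            omega
          rcases eq_or_lt_of_le (by omega : m' + (N - (d:ℤ)) ≤ j') with heq | hlt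
          · rw [← heq]
            exact htop m' hm'
          · exact hbd m' hm' j' hlt
  have hfinal := main ((N - δk + 1).toNat) m le_rfl j
  refine hfinal ?_
  have : (( (N - δk + 1).toNat : ℕ) : ℤ) ≥ N - δk + 1 := by
    rcases le_or_gt 0 (N - δk + 1) with hc | hc
    · rw [Int.toNat_of_nonneg hc]
    · have := Int.toNat_of_nonpos (by omega : N - δk + 1 ≤ 0)
      omega
  have hmax : max (N - (((N - δk + 1).toNat : ℕ) : ℤ)) (δk - 1) = δk - 1 :=
    max_eq_right (by omega)
  omega

end Kill

end NSProof

namespace NSProof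

section CoordParity

variable {a b cc : ℂ} {V : NSMod cc} {S : NSMod 0} {F : SA'Family a b S}
  {T : NSMod cc} {tw : TensorWitness V S T} (C : CoordSys F tw)

lemma cX_parity_even (j : ℤ) : ∀ z ∈ T.even, C.cX j z ∈ V.even := by
  refine even_elim (F := F) (tw := tw) ?_ ?_ ?_ ?_ ?_
  · simp
  · intro z₁ z₂ h1 h2; rw [map_add]; exact add_mem h1 h2
  · intro r z h1; rw [map_smul]; exact Submodule.smul_mem _ _ h1
  · intro v hv i
    rw [C.cX_tx]
    split_ifs
    · exact hv
    · exact Submodule.zero_mem _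
  · intro v hv i
    rw [C.cX_ty]; exact Submodule.zero_mem _

lemma cX_parity_odd (j : ℤ) : ∀ z ∈ T.odd, C.cX j z ∈ V.odd := by
  refine odd_elim (F := F) (tw := tw) ?_ ?_ ?_ ?_ ?_
  · simp
  · intro z₁ z₂ h1 h2; rw [map_add]; exact add_mem h1 h2
  · intro r z h1; rw [map_smul]; exact Submodule.smul_mem _ _ h1
  · intro v hv i
    rw [C.cX_tx]
    split_ifs
    · exact hv
    · exact Submodule.zero_mem _
  · intro v hv i
    rw [C.cX_ty]; exact Submodule.zero_mem _

lemma cY_parity_even (j : ℤ) : ∀ z ∈ T.even, C.cY j z ∈ V.odd := by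
  refine even_elim (F := F) (tw := tw) ?_ ?_ ?_ ?_ ?_
  · simp
  · intro z₁ z₂ h1 h2; rw [map_add]; exact add_mem h1 h2
  · intro r z h1; rw [map_smul]; exact Submodule.smul_mem _ _ h1
  · intro v hv i
    rw [C.cY_tx]; exact Submodule.zero_mem _
  · intro v hv i
    by_cases hij : i = j
    · subst hij
      by_cases hyi : F.y i = 0
      · rw [hyi]; simp
      · rw [C.cY_ty_eq _ _ hyi]; exact hv
    · rw [C.cY_ty_ne _ _ _ hij]; exact Submodule.zero_mem _

lemma cY_parity_odd (j : ℤ) : ∀ z ∈ T.odd, C.cY j z ∈ V.even := by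
  refine odd_elim (F := F) (tw := tw) ?_ ?_ ?_ ?_ ?_
  · simp
  · intro z₁ z₂ h1 h2; rw [map_add]; exact add_mem h1 h2
  · intro r z h1; rw [map_smul]; exact Submodule.smul_mem _ _ h1
  · intro v hv i
    rw [C.cY_tx]; exact Submodule.zero_mem _
  · intro v hv i
    by_cases hij : i = j
    · subst hij
      by_cases hyi : F.y i = 0
      · rw [hyi]; simp
      · rw [C.cY_ty_eq _ _ hyi]; exact hv
    · rw [C.cY_ty_ne _ _ _ hij]; exact Submodule.zero_mem _

end CoordParity

section Proj

variable {cc : ℂ} (T : NSMod cc)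

/-- projection onto the even part -/
def Pe : T.carrier →ₗ[ℂ] T.carrier :=
  T.even.subtype.comp (T.even.projectionOnto T.odd T.compl)

def Po : T.carrier →ₗ[ℂ] T.carrier :=
  T.odd.subtype.comp (T.odd.projectionOnto T.even T.compl.symm)

variable {T}

lemma proj_decomp {z ze zo : T.carrier} (he : ze ∈ T.even) (ho : zo ∈ T.odd)
    (hsum : z = ze + zo) : Pe T z = ze ∧ Po T z = zo := by
  constructor
  · have : Pe T z = Pe T ze + Pe T zo := by rw [hsum, map_add]
    rw [this]
    have h1 : Pe T ze = ze := by
      simp only [Pe, LinearMap.comp_apply]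
      rw [show ze = ((⟨ze, he⟩ : T.even) : T.carrier) from rfl,
        Submodule.linearProjOfIsCompl_apply_left]
      rfl
    have h2 : Pe T zo = 0 := by
      simp only [Pe, LinearMap.comp_apply]
      rw [Submodule.linearProjOfIsCompl_apply_right T.compl ⟨zo, ho⟩]
      simp
    rw [h1, h2, add_zero]
  · have : Po T z = Po T ze + Po T zo := by rw [hsum, map_add]
    rw [this]
    have h1 : Po T zo = zo := by
      simp only [Po, LinearMap.comp_apply]
      rw [show zo = ((⟨zo, ho⟩ : T.odd) : T.carrier) from rfl,
        Submodule.linearProjOfIsCompl_apply_left]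
      rfl
    have h2 : Po T ze = 0 := by
      simp only [Po, LinearMap.comp_apply]
      rw [Submodule.linearProjOfIsCompl_apply_right T.compl.symm ⟨ze, he⟩]
      simp
    rw [h1, h2, zero_add]

lemma proj_sum (z : T.carrier) : z = Pe T z + Po T z := by
  obtain ⟨ze, zo, he, ho, hsum⟩ := Submodule.codisjoint_iff_exists_add_eq.mp T.compl.codisjoint z
  obtain ⟨h1, h2⟩ := proj_decomp he ho hsum.symm
  rw [h1, h2, hsum]

lemma Pe_mem (z : T.carrier) : Pe T z ∈ T.even := (T.even.linearProjOfIsCompl T.odd T.compl z).2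

lemma Po_mem (z : T.carrier) : Po T z ∈ T.odd :=
  (T.odd.linearProjOfIsCompl T.even T.compl.symm z).2

lemma Pe_eq_self {z : T.carrier} (hz : z ∈ T.even) : Pe T z = z :=
  (proj_decomp hz (Submodule.zero_mem _) (by simp)).1

lemma Po_eq_zero {z : T.carrier} (hz : z ∈ T.even) : Po T z = 0 :=
  (proj_decomp hz (Submodule.zero_mem _) (by simp)).2

lemma Po_eq_self {z : T.carrier} (hz : z ∈ T.odd) : Po T z = z :=
  (proj_decomp (Submodule.zero_mem _) hz (by simp)).2

lemma Pe_eq_zero {z : T.carrier} (hz : z ∈ T.odd) : Pe T z = 0 :=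
  (proj_decomp (Submodule.zero_mem _) hz (by simp)).1

lemma Pe_L (k : ℤ) (z : T.carrier) : Pe T (T.L k z) = T.L k (Pe T z) := by
  have hsum : T.L k z = T.L k (Pe T z) + T.L k (Po T z) := by
    rw [← map_add, ← proj_sum]
  exact (proj_decomp (T.mapsL_even k _ (Pe_mem z)) (T.mapsL_odd k _ (Po_mem z)) hsum).1

lemma Po_L (k : ℤ) (z : T.carrier) : Po T (T.L k z) = T.L k (Po T z) := by
  have hsum : T.L k z = T.L k (Pe T z) + T.L k (Po T z) := by
    rw [← map_add, ← proj_sum]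
  exact (proj_decomp (T.mapsL_even k _ (Pe_mem z)) (T.mapsL_odd k _ (Po_mem z)) hsum).2

lemma Pe_G (k : ℤ) (z : T.carrier) : Pe T (T.G k z) = T.G k (Po T z) := by
  have hsum : T.G k z = T.G k (Po T z) + T.G k (Pe T z) := by
    rw [← map_add, add_comm, ← proj_sum z]
  exact (proj_decomp (T.mapsG_odd k _ (Po_mem z)) (T.mapsG_even k _ (Pe_mem z)) hsum).1

lemma Po_G (k : ℤ) (z : T.carrier) : Po T (T.G k z) = T.G k (Pe T z) := by
  have hsum : T.G k z = T.G k (Po T z) + T.G k (Pe T z) := by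
    rw [← map_add, add_comm, ← proj_sum z]
  exact (proj_decomp (T.mapsG_odd k _ (Po_mem z)) (T.mapsG_even k _ (Pe_mem z)) hsum).2

end Proj

end NSProof

namespace NSProof

section MainArg

variable {a b cc hw : ℂ} {V : NSMod cc} {u : V.carrier} {S : NSMod 0} {F : SA'Family a b S}
  {T : NSMod cc} {tw : TensorWitness V S T}

-- helper numeric lemmas
lemma a_half {a : ℂ} (ha0 : 0 ≤ a.re) (ha1 : a.re < 1) {t : ℤ}
    (heq : a + (t:ℂ) + 1/2 = 0) : a = 1/2 ∧ t = -1 := by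
  have hA : a = -(t:ℂ) - 1/2 := by linear_combination heq
  have hre : a.re = -(t:ℝ) - 1/2 := by
    rw [hA]
    simp [Complex.sub_re, Complex.neg_re]
  have h1 : (t:ℝ) ≤ -1/2 := by
    rw [hre] at ha0; linarith
  have h2 : (-3/2 : ℝ) < (t:ℝ) := by
    rw [hre] at ha1; linarith
  have ht : t = -1 := by
    have h1' : (t:ℝ) < 0 := by linarith
    have h2' : (-2:ℝ) < (t:ℝ) := by linarith
    have h3 : t < 0 := by exact_mod_cast h1'
    have h4 : (-2:ℤ) < t := by exact_mod_cast h2'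
    omega
  refine ⟨?_, ht⟩
  rw [hA, ht]
  norm_num

lemma wt_ne (hw : ℂ) {t : ℤ} (ht : 1 ≤ t) : ∀ n : ℕ, hw + (t:ℂ)/2 ≠ hw - (n:ℂ)/2 := by
  intro n heq
  have : (t:ℂ) = -(n:ℂ) := by linear_combination 2*heq
  have h2 : t = -(n:ℤ) := by exact_mod_cast this
  omega

-- generator action lemmas
lemma R0x (hu : IsHW hw V u) (m : ℤ) :
    T.L 0 (tw.t u (F.x m)) = (hw + a + (m:ℂ)) • tw.t u (F.x m) := by
  rw [tw.actL, hu.hw0, F.act_Lx]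
  simp only [map_smul, LinearMap.smul_apply, zero_add]
  push_cast
  module

lemma R0y (hu : IsHW hw V u) (m : ℤ) :
    T.L 0 (tw.t u (F.y m)) = (hw + a + 1/2 + (m:ℂ)) • tw.t u (F.y m) := by
  rw [tw.actL, hu.hw0, F.act_Ly]
  simp only [map_smul, LinearMap.smul_apply, zero_add]
  push_cast
  module

lemma R1x (hu : IsHW hw V u) {k : ℤ} (hk : 1 ≤ k) (m : ℤ) :
    T.L k (tw.t u (F.x m)) = (a + (m:ℂ) + (k:ℂ)*b) • tw.t u (F.x (k+m)) := by
  rw [tw.actL, hu.hwL k hk, F.act_Lx]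
  simp only [map_zero, LinearMap.zero_apply, map_smul, zero_add]

lemma R2y (hu : IsHW hw V u) {k : ℤ} (hk : 1 ≤ k) (m : ℤ) :
    T.L k (tw.t u (F.y m))
      = (a + 1/2 + (m:ℂ) + (k:ℂ)*(b - 1/2)) • tw.t u (F.y (k+m)) := by
  rw [tw.actL, hu.hwL k hk, F.act_Ly]
  simp only [map_zero, LinearMap.zero_apply, map_smul, zero_add]

lemma R3x (hu : IsHW hw V u) {k : ℤ} (hk : 0 ≤ k) (m : ℤ) :
    T.G k (tw.t u (F.x m)) = tw.t u (F.y (k+m)) := by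
  rw [tw.actG_even k u hu.mem_even, hu.hwG k hk, F.act_Gx]
  simp only [map_zero, LinearMap.zero_apply, zero_add]

lemma R4y (hu : IsHW hw V u) {k : ℤ} (hk : 0 ≤ k) (m : ℤ) :
    T.G k (tw.t u (F.y m))
      = (a + 1/2 + (m:ℂ) + (2*(k:ℂ)+1)*(b - 1/2)) • tw.t u (F.x (k+m+1)) := by
  rw [tw.actG_even k u hu.mem_even, hu.hwG k hk, F.act_Gy]
  simp only [map_zero, LinearMap.zero_apply, map_smul, zero_add]

variable (C : CoordSys F tw)

-- eigenvalue relations for the coordinate rows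
lemma eig_fX (hu : IsHW hw V u) {ψ : T.carrier →ₗ[ℂ] T.carrier}
    (hψL : ∀ (k : ℤ) (z : T.carrier), ψ (T.L k z) = T.L k (ψ z)) (m j : ℤ) :
    V.L 0 (C.cX j (ψ (tw.t u (F.x m))))
      = (hw + (m:ℂ) - (j:ℂ)) • C.cX j (ψ (tw.t u (F.x m))) := by
  have h1 := cXL C j 0 (ψ (tw.t u (F.x m)))
  have h2 : T.L 0 (ψ (tw.t u (F.x m))) = (hw + a + (m:ℂ)) • ψ (tw.t u (F.x m)) := by
    rw [← hψL, R0x hu, map_smul]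
  rw [h2, map_smul, show j - (0:ℤ) = j from by ring] at h1
  calc V.L 0 (C.cX j (ψ (tw.t u (F.x m))))
      = (hw + a + (m:ℂ)) • C.cX j (ψ (tw.t u (F.x m)))
        - (a + ((j:ℂ) - ((0:ℤ):ℂ)) + ((0:ℤ):ℂ)*b) • C.cX j (ψ (tw.t u (F.x m))) := by
        rw [h1]; abel
    _ = (hw + (m:ℂ) - (j:ℂ)) • C.cX j (ψ (tw.t u (F.x m))) := by
        rw [← sub_smul]; congr 1; push_cast; ring

lemma eig_gX (hu : IsHW hw V u) {ψ : T.carrier →ₗ[ℂ] T.carrier}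
    (hψL : ∀ (k : ℤ) (z : T.carrier), ψ (T.L k z) = T.L k (ψ z)) (m j : ℤ) :
    V.L 0 (C.cY j (ψ (tw.t u (F.x m))))
      = (hw + (m:ℂ) - (j:ℂ) - 1/2) • C.cY j (ψ (tw.t u (F.x m))) := by
  by_cases hyj : F.y j = 0
  · rw [C.cY_bad j hyj]; simp
  have h1 := cYL C j 0 hyj (ψ (tw.t u (F.x m)))
  have h2 : T.L 0 (ψ (tw.t u (F.x m))) = (hw + a + (m:ℂ)) • ψ (tw.t u (F.x m)) := by
    rw [← hψL, R0x hu, map_smul]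
  rw [h2, map_smul, show j - (0:ℤ) = j from by ring] at h1
  calc V.L 0 (C.cY j (ψ (tw.t u (F.x m))))
      = (hw + a + (m:ℂ)) • C.cY j (ψ (tw.t u (F.x m)))
        - (a + 1/2 + ((j:ℂ) - ((0:ℤ):ℂ)) + ((0:ℤ):ℂ)*(b-1/2)) • C.cY j (ψ (tw.t u (F.x m))) := by
        rw [h1]; abel
    _ = _ := by
        rw [← sub_smul]; congr 1; push_cast; ring

lemma eig_fY (hu : IsHW hw V u) {ψ : T.carrier →ₗ[ℂ] T.carrier}
    (hψL : ∀ (k : ℤ) (z : T.carrier), ψ (T.L k z) = T.L k (ψ z)) (m j : ℤ) :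
    V.L 0 (C.cX j (ψ (tw.t u (F.y m))))
      = (hw + (m:ℂ) - (j:ℂ) + 1/2) • C.cX j (ψ (tw.t u (F.y m))) := by
  have h1 := cXL C j 0 (ψ (tw.t u (F.y m)))
  have h2 : T.L 0 (ψ (tw.t u (F.y m))) = (hw + a + 1/2 + (m:ℂ)) • ψ (tw.t u (F.y m)) := by
    rw [← hψL, R0y hu, map_smul]
  rw [h2, map_smul, show j - (0:ℤ) = j from by ring] at h1
  calc V.L 0 (C.cX j (ψ (tw.t u (F.y m))))
      = (hw + a + 1/2 + (m:ℂ)) • C.cX j (ψ (tw.t u (F.y m)))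
        - (a + ((j:ℂ) - ((0:ℤ):ℂ)) + ((0:ℤ):ℂ)*b) • C.cX j (ψ (tw.t u (F.y m))) := by
        rw [h1]; abel
    _ = _ := by
        rw [← sub_smul]; congr 1; push_cast; ring

lemma eig_gY (hu : IsHW hw V u) {ψ : T.carrier →ₗ[ℂ] T.carrier}
    (hψL : ∀ (k : ℤ) (z : T.carrier), ψ (T.L k z) = T.L k (ψ z)) (m j : ℤ) :
    V.L 0 (C.cY j (ψ (tw.t u (F.y m))))
      = (hw + (m:ℂ) - (j:ℂ)) • C.cY j (ψ (tw.t u (F.y m))) := by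
  by_cases hyj : F.y j = 0
  · rw [C.cY_bad j hyj]; simp
  have h1 := cYL C j 0 hyj (ψ (tw.t u (F.y m)))
  have h2 : T.L 0 (ψ (tw.t u (F.y m))) = (hw + a + 1/2 + (m:ℂ)) • ψ (tw.t u (F.y m)) := by
    rw [← hψL, R0y hu, map_smul]
  rw [h2, map_smul, show j - (0:ℤ) = j from by ring] at h1
  calc V.L 0 (C.cY j (ψ (tw.t u (F.y m))))
      = (hw + a + 1/2 + (m:ℂ)) • C.cY j (ψ (tw.t u (F.y m)))
        - (a + 1/2 + ((j:ℂ) - ((0:ℤ):ℂ)) + ((0:ℤ):ℂ)*(b-1/2)) • C.cY j (ψ (tw.t u (F.y m))) := by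
        rw [h1]; abel
    _ = _ := by
        rw [← sub_smul]; congr 1; push_cast; ring

-- low-offset vanishing
lemma low_fX (hu : IsHW hw V u) {ψ : T.carrier →ₗ[ℂ] T.carrier}
    (hψL : ∀ (k : ℤ) (z : T.carrier), ψ (T.L k z) = T.L k (ψ z)) {m j : ℤ} (hj : j < m) :
    C.cX j (ψ (tw.t u (F.x m))) = 0 := by
  refine eig_vanish hu (lam := hw + ((2*(m-j) : ℤ):ℂ)/2) ?_ ?_
  · rw [eig_fX C hu hψL m j]; congr 1; push_cast; ring
  · exact wt_ne hw (by omega)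

lemma low_gX (hu : IsHW hw V u) {ψ : T.carrier →ₗ[ℂ] T.carrier}
    (hψL : ∀ (k : ℤ) (z : T.carrier), ψ (T.L k z) = T.L k (ψ z)) {m j : ℤ} (hj : j < m) :
    C.cY j (ψ (tw.t u (F.x m))) = 0 := by
  refine eig_vanish hu (lam := hw + ((2*(m-j)-1 : ℤ):ℂ)/2) ?_ ?_
  · rw [eig_gX C hu hψL m j]; congr 1; push_cast; ring
  · exact wt_ne hw (by omega)

lemma low_fY (hu : IsHW hw V u) {ψ : T.carrier →ₗ[ℂ] T.carrier}
    (hψL : ∀ (k : ℤ) (z : T.carrier), ψ (T.L k z) = T.L k (ψ z)) {m j : ℤ} (hj : j ≤ m) :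
    C.cX j (ψ (tw.t u (F.y m))) = 0 := by
  refine eig_vanish hu (lam := hw + ((2*(m-j)+1 : ℤ):ℂ)/2) ?_ ?_
  · rw [eig_fY C hu hψL m j]; congr 1; push_cast; ring
  · exact wt_ne hw (by omega)

lemma low_gY (hu : IsHW hw V u) {ψ : T.carrier →ₗ[ℂ] T.carrier}
    (hψL : ∀ (k : ℤ) (z : T.carrier), ψ (T.L k z) = T.L k (ψ z)) {m j : ℤ} (hj : j < m) :
    C.cY j (ψ (tw.t u (F.y m))) = 0 := by
  refine eig_vanish hu (lam := hw + ((2*(m-j) : ℤ):ℂ)/2) ?_ ?_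
  · rw [eig_gY C hu hψL m j]; congr 1; push_cast; ring
  · exact wt_ne hw (by omega)

-- finite support of coordinate rows
lemma row_fin (z : T.carrier) :
    ∃ N : ℤ, ∀ j, N < j → C.cX j z = 0 ∧ C.cY j z = 0 := by
  obtain ⟨ub, hub⟩ := (C.fin z).bddAbove
  refine ⟨ub, fun j hj => ?_⟩
  by_contra hcon
  have hmem : j ∈ {j : ℤ | C.cX j z ≠ 0 ∨ C.cY j z ≠ 0} := by
    simp only [Set.mem_setOf_eq]
    tauto
  have := hub hmem
  omega

end MainArg

end NSProof

namespace NSProof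

section MainArg2

variable {a b cc hw : ℂ} {V : NSMod cc} {u : V.carrier} {S : NSMod 0} {F : SA'Family a b S}
  {T : NSMod cc} {tw : TensorWitness V S T} (C : CoordSys F tw)

lemma yzero (ha0 : 0 ≤ a.re) (ha1 : a.re < 1) {i : ℤ} (hi : F.y i = 0) : i = -1 := by
  by_cases hs : a = 1/2 ∧ b = 1/2
  · by_contra hne
    exact y_ne_zero_special F hs i hne hi
  · exact absurd hi (y_ne_zero_generic F hs i)

lemma kill_g (ha0 : 0 ≤ a.re) (ha1 : a.re < 1) (hb : b ≠ 1)
    (hu : IsHW hw V u) {ψ : T.carrier →ₗ[ℂ] T.carrier}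
    (hψL : ∀ (k : ℤ) (z : T.carrier), ψ (T.L k z) = T.L k (ψ z)) :
    ∀ m j : ℤ, C.cY j (ψ (tw.t u (F.x m))) = 0 := by
  have hkill := generalKill (V := V) a (fun m j => C.cY j (ψ (tw.t u (F.x m))))
    0 (1/2) b (b - 1/2) 0 {j : ℤ | F.y j = 0} ?_ ?_ ?_ ?_ ?_ ?_ ?_
  · intro m j
    rcases le_or_gt m j with hmj | hmj
    · exact hkill m j (by omega)
    · exact low_gX C hu hψL hmj
  · intro j hj
    exact yzero ha0 ha1 hj
  · intro m j hj
    simp only [Set.mem_setOf_eq] at hj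
    rw [C.cY_bad j hj]
    rfl
  · intro m
    obtain ⟨N, hN⟩ := row_fin C (ψ (tw.t u (F.x m)))
    exact ⟨N - m, fun j hj => (hN j (by omega)).2⟩
  · intro m k j hk hjB
    simp only [Set.mem_setOf_eq] at hjB
    have h1 := cYL C j k hjB (ψ (tw.t u (F.x m)))
    rw [← hψL, R1x hu hk, map_smul, map_smul] at h1
    rw [show m + k = k + m from by ring,
      show a + (m:ℂ) + 0 + (k:ℂ)*b = a + (m:ℂ) + (k:ℂ)*b from by ring]
    exact h1
  · intro δ hδ heq
    have : ((2*δ+1 : ℤ):ℂ) = 0 := by push_cast; linear_combination 2*heq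
    have h2 : 2*δ+1 = 0 := by exact_mod_cast this
    omega
  · intro m δ hδ hb2 heq
    have hb12 : b = 1/2 := by linear_combination hb2
    have := a_half ha0 ha1 (t := m + δ) (by push_cast; linear_combination heq)
    have hy : F.y (m+δ) = 0 := by
      rw [this.2]
      exact (F.indep_special ⟨this.1, hb12⟩).1
    rw [C.cY_bad _ hy]
    rfl
  · intro n κ hκ e1 e2
    exfalso
    apply hb
    linear_combination e1 - e2

lemma kill_g' (ha0 : 0 ≤ a.re) (ha1 : a.re < 1) (hb : b ≠ 1)
    (hu : IsHW hw V u) {ψ : T.carrier →ₗ[ℂ] T.carrier}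
    (hψL : ∀ (k : ℤ) (z : T.carrier), ψ (T.L k z) = T.L k (ψ z)) :
    ∀ m j : ℤ, j ≠ m → C.cY j (ψ (tw.t u (F.y m))) = 0 := by
  have hkill := generalKill (V := V) a (fun m j => C.cY j (ψ (tw.t u (F.y m))))
    (1/2) (1/2) (b - 1/2) (b - 1/2) 1 {j : ℤ | F.y j = 0} ?_ ?_ ?_ ?_ ?_ ?_ ?_
  · intro m j hne
    rcases le_or_gt m j with hmj | hmj
    · exact hkill m j (by omega)
    · exact low_gY C hu hψL hmj
  · intro j hj
    exact yzero ha0 ha1 hj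
  · intro m j hj
    simp only [Set.mem_setOf_eq] at hj
    rw [C.cY_bad j hj]
    rfl
  · intro m
    obtain ⟨N, hN⟩ := row_fin C (ψ (tw.t u (F.y m)))
    exact ⟨N - m, fun j hj => (hN j (by omega)).2⟩
  · intro m k j hk hjB
    simp only [Set.mem_setOf_eq] at hjB
    have h1 := cYL C j k hjB (ψ (tw.t u (F.y m)))
    rw [← hψL, R2y hu hk, map_smul, map_smul] at h1
    rw [show m + k = k + m from by ring,
      show a + (m:ℂ) + 1/2 + (k:ℂ)*(b-1/2) = a + 1/2 + (m:ℂ) + (k:ℂ)*(b-1/2) from by ring]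
    exact h1
  · intro δ hδ heq
    have : ((δ : ℤ):ℂ) = 0 := by linear_combination heq
    have h2 : δ = 0 := by exact_mod_cast this
    omega
  · intro m δ hδ hb2 heq
    have hb12 : b = 1/2 := by linear_combination hb2
    have := a_half ha0 ha1 (t := m + δ) (by push_cast; linear_combination heq)
    have hy : F.y (m+δ) = 0 := by
      rw [this.2]
      exact (F.indep_special ⟨this.1, hb12⟩).1
    rw [C.cY_bad _ hy]
    rfl
  · intro n κ hκ e1 e2
    by_cases hb32 : b = 3/2
    · rw [hb32] at e1
      have := a_half ha0 ha1 (t := n + κ) (by push_cast; linear_combination e1)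
      exact this.2
    · exfalso
      apply hb32
      linear_combination e1 - e2

-- relation (4)
lemma rel4 (hu : IsHW hw V u) {ψ : T.carrier →ₗ[ℂ] T.carrier}
    (hψG : ∀ (k : ℤ) (z : T.carrier), ψ (T.G k z) = T.G k (ψ z))
    (hψe : ∀ z ∈ T.even, ψ z ∈ T.even)
    {k : ℤ} (hk : 0 ≤ k) {j : ℤ} (hyj : F.y j ≠ 0) (m : ℤ) :
    C.cY j (ψ (tw.t u (F.y (k+m))))
      = V.G k (C.cY j (ψ (tw.t u (F.x m)))) + C.cX (j-k) (ψ (tw.t u (F.x m))) := by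
  have hze : ψ (tw.t u (F.x m)) ∈ T.even :=
    hψe _ (tw.grade_ee u hu.mem_even _ (F.x_even m))
  have h1 := cYGe C j k hyj (ψ (tw.t u (F.x m))) hze
  rw [← hψG, R3x hu hk] at h1
  exact h1

-- relation (8) with the g-row already killed
lemma rel8 (ha0 : 0 ≤ a.re) (ha1 : a.re < 1) (hb : b ≠ 1) (hu : IsHW hw V u)
    {ψ : T.carrier →ₗ[ℂ] T.carrier}
    (hψL : ∀ (k : ℤ) (z : T.carrier), ψ (T.L k z) = T.L k (ψ z))
    (hψG : ∀ (k : ℤ) (z : T.carrier), ψ (T.G k z) = T.G k (ψ z))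
    (hψo : ∀ z ∈ T.odd, ψ z ∈ T.odd)
    {k : ℤ} (hk : 0 ≤ k) {j : ℤ} (hyj : F.y j ≠ 0) (m : ℤ) :
    C.cX (j-k) (ψ (tw.t u (F.y m))) = V.G k (C.cY j (ψ (tw.t u (F.y m)))) := by
  have hzo : ψ (tw.t u (F.y m)) ∈ T.odd :=
    hψo _ (tw.grade_eo u hu.mem_even _ (F.y_odd m))
  have h1 := cYGo C j k hyj (ψ (tw.t u (F.y m))) hzo
  rw [← hψG, R4y hu hk, map_smul, map_smul] at h1
  rw [kill_g C ha0 ha1 hb hu hψL (k+m+1) j, smul_zero] at h1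
  have := h1.symm
  rw [sub_eq_zero] at this
  exact this.symm

lemma kill_f (ha0 : 0 ≤ a.re) (ha1 : a.re < 1) (hb : b ≠ 1) (hu : IsHW hw V u)
    {ψ : T.carrier →ₗ[ℂ] T.carrier}
    (hψL : ∀ (k : ℤ) (z : T.carrier), ψ (T.L k z) = T.L k (ψ z))
    (hψG : ∀ (k : ℤ) (z : T.carrier), ψ (T.G k z) = T.G k (ψ z))
    (hψe : ∀ z ∈ T.even, ψ z ∈ T.even) :
    ∀ m j : ℤ, j ≠ m → C.cX j (ψ (tw.t u (F.x m))) = 0 := by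
  intro m j hne
  rcases lt_or_gt_of_ne hne with hj | hj
  · exact low_fX C hu hψL hj
  · obtain ⟨k, hk0, hkne⟩ : ∃ k : ℤ, 0 ≤ k ∧ j + k ≠ -1 := by
      by_cases h1 : j = -1
      · exact ⟨1, by omega, by omega⟩
      · exact ⟨0, by omega, by omega⟩
    have hyj : F.y (j+k) ≠ 0 := fun hzero => hkne (yzero ha0 ha1 hzero)
    have h4 := rel4 C hu hψG hψe hk0 hyj m
    rw [kill_g C ha0 ha1 hb hu hψL m (j+k), map_zero, zero_add,
      show j + k - k = j from by ring] at h4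
    rw [← h4]
    exact kill_g' C ha0 ha1 hb hu hψL (k+m) (j+k) (by omega)

lemma kill_f' (ha0 : 0 ≤ a.re) (ha1 : a.re < 1) (hb : b ≠ 1) (hu : IsHW hw V u)
    {ψ : T.carrier →ₗ[ℂ] T.carrier}
    (hψL : ∀ (k : ℤ) (z : T.carrier), ψ (T.L k z) = T.L k (ψ z))
    (hψG : ∀ (k : ℤ) (z : T.carrier), ψ (T.G k z) = T.G k (ψ z))
    (hψo : ∀ z ∈ T.odd, ψ z ∈ T.odd) :
    ∀ m j : ℤ, C.cX j (ψ (tw.t u (F.y m))) = 0 := by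
  intro m j
  rcases le_or_gt j m with hj | hj
  · exact low_fY C hu hψL hj
  · obtain ⟨k, hk0, hkne⟩ : ∃ k : ℤ, 0 ≤ k ∧ j + k ≠ -1 := by
      by_cases h1 : j = -1
      · exact ⟨1, by omega, by omega⟩
      · exact ⟨0, by omega, by omega⟩
    have hyj : F.y (j+k) ≠ 0 := fun hzero => hkne (yzero ha0 ha1 hzero)
    have h8 := rel8 C ha0 ha1 hb hu hψL hψG hψo hk0 hyj m
    rw [show j + k - k = j from by ring] at h8
    rw [h8, kill_g' C ha0 ha1 hb hu hψL m (j+k) (by omega), map_zero]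

lemma diag_eq (ha0 : 0 ≤ a.re) (ha1 : a.re < 1) (hb : b ≠ 1) (hu : IsHW hw V u)
    {ψ : T.carrier →ₗ[ℂ] T.carrier}
    (hψL : ∀ (k : ℤ) (z : T.carrier), ψ (T.L k z) = T.L k (ψ z))
    (hψG : ∀ (k : ℤ) (z : T.carrier), ψ (T.G k z) = T.G k (ψ z))
    (hψe : ∀ z ∈ T.even, ψ z ∈ T.even)
    {k : ℤ} (hk : 0 ≤ k) (m : ℤ) (hy : F.y (m+k) ≠ 0) :
    C.cY (m+k) (ψ (tw.t u (F.y (m+k)))) = C.cX m (ψ (tw.t u (F.x m))) := by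
  have h4 := rel4 C hu hψG hψe hk (j := m+k) hy m
  rw [kill_g C ha0 ha1 hb hu hψL m (m+k), map_zero, zero_add,
    show m + k - k = m from by ring, show k + m = m + k from by ring] at h4
  exact h4

end MainArg2

end NSProof

namespace NSProof

section MainArg3

variable {a b cc hw : ℂ} {V : NSMod cc} {u : V.carrier} {S : NSMod 0} {F : SA'Family a b S}
  {T : NSMod cc} {tw : TensorWitness V S T} (C : CoordSys F tw)

lemma psi_scalar (C : CoordSys F tw) (ha0 : 0 ≤ a.re) (ha1 : a.re < 1) (hb : b ≠ 1) (hu : IsHW hw V u)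
    {ψ : T.carrier →ₗ[ℂ] T.carrier}
    (hψL : ∀ (k : ℤ) (z : T.carrier), ψ (T.L k z) = T.L k (ψ z))
    (hψG : ∀ (k : ℤ) (z : T.carrier), ψ (T.G k z) = T.G k (ψ z))
    (hψe : ∀ z ∈ T.even, ψ z ∈ T.even) (hψo : ∀ z ∈ T.odd, ψ z ∈ T.odd) :
    ∃ z : ℂ, (∀ m : ℤ, ψ (tw.t u (F.x m)) = z • tw.t u (F.x m)) ∧
      (∀ m : ℤ, ψ (tw.t u (F.y m)) = z • tw.t u (F.y m)) := by
  have heig0 : V.L 0 (C.cX 0 (ψ (tw.t u (F.x 0)))) = hw • C.cX 0 (ψ (tw.t u (F.x 0))) := by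
    have := eig_fX C hu hψL 0 0
    rwa [show hw + ((0:ℤ):ℂ) - ((0:ℤ):ℂ) = hw from by push_cast; ring] at this
  have hconst : ∀ m m' : ℤ,
      C.cX m (ψ (tw.t u (F.x m))) = C.cX m' (ψ (tw.t u (F.x m'))) := by
    intro m m'
    obtain ⟨n, hn1, hn2, hn3⟩ : ∃ n : ℤ, m ≤ n ∧ m' ≤ n ∧ n ≠ -1 := by
      rcases le_total m m' with hc | hc
      · by_cases hd : m' + 2 = -1
        · exact ⟨m' + 3, by omega, by omega, by omega⟩
        · exact ⟨m' + 2, by omega, by omega, by omega⟩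
      · by_cases hd : m + 2 = -1
        · exact ⟨m + 3, by omega, by omega, by omega⟩
        · exact ⟨m + 2, by omega, by omega, by omega⟩
    have hyn : F.y n ≠ 0 := fun h0 => hn3 (yzero ha0 ha1 h0)
    have h1 := diag_eq C ha0 ha1 hb hu hψL hψG hψe (k := n - m) (by omega) m
      (by rwa [show m + (n-m) = n from by ring])
    have h2 := diag_eq C ha0 ha1 hb hu hψL hψG hψe (k := n - m') (by omega) m'
      (by rwa [show m' + (n-m') = n from by ring])
    rw [show m + (n - m) = n from by ring] at h1
    rw [show m' + (n - m') = n from by ring] at h2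
    rw [← h1, ← h2]
  obtain ⟨z, hz⟩ := D0_eq hu heig0
  refine ⟨z, ?_, ?_⟩
  · intro m
    have hdiff : ψ (tw.t u (F.x m)) - z • tw.t u (F.x m) = 0 := by
      apply C.inj
      · intro j
        rw [map_sub, map_smul, C.cX_tx]
        by_cases hjm : m = j
        · subst hjm
          rw [if_pos rfl, hconst m 0, hz, sub_self]
        · rw [if_neg hjm, smul_zero, sub_zero]
          exact kill_f C ha0 ha1 hb hu hψL hψG hψe m j (fun hh => hjm hh.symm)
      · intro j
        rw [map_sub, map_smul, C.cY_tx, smul_zero, sub_zero]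
        exact kill_g C ha0 ha1 hb hu hψL m j
    exact sub_eq_zero.mp hdiff
  · intro m
    by_cases hym : F.y m = 0
    · rw [hym]
      simp
    · have hdiff : ψ (tw.t u (F.y m)) - z • tw.t u (F.y m) = 0 := by
        apply C.inj
        · intro j
          rw [map_sub, map_smul, C.cX_ty, smul_zero, sub_zero]
          exact kill_f' C ha0 ha1 hb hu hψL hψG hψo m j
        · intro j
          rw [map_sub, map_smul]
          by_cases hjm : j = m
          · subst hjm
            rw [C.cY_ty_eq _ _ hym]
            have hd := diag_eq C ha0 ha1 hb hu hψL hψG hψe (k := 0) (le_rfl) j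
              (by rwa [show j + (0:ℤ) = j from by ring])
            rw [show j + (0:ℤ) = j from by ring] at hd
            rw [hd, hconst j 0, hz, sub_self]
          · rw [C.cY_ty_ne _ _ _ (Ne.symm hjm), smul_zero, sub_zero]
            exact kill_g' C ha0 ha1 hb hu hψL m j hjm
      exact sub_eq_zero.mp hdiff

lemma psi_rev_zero (C : CoordSys F tw) (ha0 : 0 ≤ a.re) (ha1 : a.re < 1) (hu : IsHW hw V u)
    {ψ : T.carrier →ₗ[ℂ] T.carrier}
    (hψL : ∀ (k : ℤ) (z : T.carrier), ψ (T.L k z) = T.L k (ψ z))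
    (hψeo : ∀ z ∈ T.even, ψ z ∈ T.odd) (hψoe : ∀ z ∈ T.odd, ψ z ∈ T.even) :
    (∀ m : ℤ, ψ (tw.t u (F.x m)) = 0) ∧ (∀ m : ℤ, ψ (tw.t u (F.y m)) = 0) := by
  have key : ∀ v : V.carrier, v ∈ V.even → v ∈ V.odd → v = 0 :=
    Submodule.disjoint_def.mp V.compl.disjoint
  have castfact : ∀ t : ℤ, 0 ≤ t → ((t.toNat : ℕ) : ℂ) = (t : ℂ) := by
    intro t ht
    have h1 : ((t.toNat : ℕ) : ℤ) = t := Int.toNat_of_nonneg ht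
    exact_mod_cast congrArg (fun s : ℤ => (s : ℂ)) h1
  constructor
  · intro m
    have hzo : ψ (tw.t u (F.x m)) ∈ T.odd :=
      hψeo _ (tw.grade_ee u hu.mem_even _ (F.x_even m))
    apply C.inj
    · intro j
      rcases lt_or_ge j m with hj | hj
      · exact low_fX C hu hψL hj
      · refine key _ ?_ (cX_parity_odd C j _ hzo)
        refine Dsp_parity_even (n := (2*(j-m)).toNat) hu ⟨(j-m).toNat, by omega⟩ ?_
        rw [mem_Dsp, eig_fX C hu hψL m j]
        congr 1
        rw [castfact _ (by omega)]
        push_cast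
        ring
    · intro j
      rcases lt_or_ge j m with hj | hj
      · exact low_gX C hu hψL hj
      · refine key _ (cY_parity_odd C j _ hzo) ?_
        refine Dsp_parity_odd (n := (2*(j-m)+1).toNat) hu
          (Nat.not_even_iff_odd.mpr ⟨(j-m).toNat, by omega⟩) ?_
        rw [mem_Dsp, eig_gX C hu hψL m j]
        congr 1
        rw [castfact _ (by omega)]
        push_cast
        ring
  · intro m
    have hze : ψ (tw.t u (F.y m)) ∈ T.even :=
      hψoe _ (tw.grade_eo u hu.mem_even _ (F.y_odd m))
    apply C.inj
    · intro j
      rcases le_or_gt j m with hj | hj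
      · exact low_fY C hu hψL hj
      · refine key _ (cX_parity_even C j _ hze) ?_
        refine Dsp_parity_odd (n := (2*(j-m)-1).toNat) hu
          (Nat.not_even_iff_odd.mpr ⟨(j-m-1).toNat, by omega⟩) ?_
        rw [mem_Dsp, eig_fY C hu hψL m j]
        congr 1
        rw [castfact _ (by omega)]
        push_cast
        ring
    · intro j
      rcases lt_or_ge j m with hj | hj
      · exact low_gY C hu hψL hj
      · refine key _ ?_ (cY_parity_even C j _ hze)
        refine Dsp_parity_even (n := (2*(j-m)).toNat) hu ⟨(j-m).toNat, by omega⟩ ?_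
        rw [mem_Dsp, eig_gY C hu hψL m j]
        congr 1
        rw [castfact _ (by omega)]
        push_cast
        ring

end MainArg3

end NSProof

namespace NSProof

section GenZero

variable {a b cc hw : ℂ} {V : NSMod cc} {u : V.carrier} {S : NSMod 0} {F : SA'Family a b S}
  {T : NSMod cc} {tw : TensorWitness V S T}

lemma gen_zero (hu : IsHW hw V u) {χ : T.carrier →ₗ[ℂ] T.carrier}
    (hχL : ∀ (k : ℤ) (z : T.carrier), χ (T.L k z) = T.L k (χ z))
    (hχG : ∀ (k : ℤ) (z : T.carrier), χ (T.G k z) = T.G k (χ z))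
    (hx : ∀ m : ℤ, χ (tw.t u (F.x m)) = 0) (hy : ∀ m : ℤ, χ (tw.t u (F.y m)) = 0) :
    ∀ z : T.carrier, χ z = 0 := by
  set A : Submodule ℂ V.carrier :=
    { carrier := {v | (∀ m : ℤ, χ (tw.t v (F.x m)) = 0) ∧ (∀ m : ℤ, χ (tw.t v (F.y m)) = 0)}
      add_mem' := by
        rintro v w ⟨hv1, hv2⟩ ⟨hw1, hw2⟩
        constructor <;> intro m <;>
          simp [map_add, LinearMap.add_apply, hv1 m, hv2 m, hw1 m, hw2 m]
      zero_mem' := by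
        constructor <;> intro m <;>
          simp [map_zero, LinearMap.zero_apply]
      smul_mem' := by
        rintro r v ⟨hv1, hv2⟩
        constructor <;> intro m <;>
          simp [map_smul, LinearMap.smul_apply, hv1 m, hv2 m] } with hA
  have hmemA : ∀ v : V.carrier, v ∈ A ↔
      (∀ m : ℤ, χ (tw.t v (F.x m)) = 0) ∧ (∀ m : ℤ, χ (tw.t v (F.y m)) = 0) := by
    intro v; rfl
  have hAL : ∀ k : ℤ, ∀ v ∈ A, V.L k v ∈ A := by
    intro k v hv
    rw [hmemA] at hv ⊢
    constructor
    · intro m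
      have e := tw.actL k v (F.x m)
      rw [F.act_Lx, map_smul] at e
      have e2 : tw.t (V.L k v) (F.x m)
          = T.L k (tw.t v (F.x m)) - (a + (m:ℂ) + (k:ℂ)*b) • tw.t v (F.x (k+m)) := by
        rw [e]; abel
      rw [e2, map_sub, hχL, hv.1 m, map_zero, map_smul, hv.1 (k+m), smul_zero, sub_zero]
    · intro m
      have e := tw.actL k v (F.y m)
      rw [F.act_Ly, map_smul] at e
      have e2 : tw.t (V.L k v) (F.y m)
          = T.L k (tw.t v (F.y m)) - (a + 1/2 + (m:ℂ) + (k:ℂ)*(b-1/2)) • tw.t v (F.y (k+m)) := by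
        rw [e]; abel
      rw [e2, map_sub, hχL, hv.2 m, map_zero, map_smul, hv.2 (k+m), smul_zero, sub_zero]
  have hAGe : ∀ k : ℤ, ∀ v ∈ A, v ∈ V.even → V.G k v ∈ A := by
    intro k v hv hve
    rw [hmemA] at hv ⊢
    constructor
    · intro m
      have e := tw.actG_even k v hve (F.x m)
      rw [F.act_Gx] at e
      have e2 : tw.t (V.G k v) (F.x m)
          = T.G k (tw.t v (F.x m)) - tw.t v (F.y (k+m)) := by
        rw [e]; abel
      rw [e2, map_sub, hχG, hv.1 m, map_zero, hv.2 (k+m), sub_zero]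
    · intro m
      have e := tw.actG_even k v hve (F.y m)
      rw [F.act_Gy, map_smul] at e
      have e2 : tw.t (V.G k v) (F.y m)
          = T.G k (tw.t v (F.y m))
            - (a + 1/2 + (m:ℂ) + (2*(k:ℂ)+1)*(b-1/2)) • tw.t v (F.x (k+m+1)) := by
        rw [e]; abel
      rw [e2, map_sub, hχG, hv.2 m, map_zero, map_smul, hv.1 (k+m+1), smul_zero, sub_zero]
  have hAGo : ∀ k : ℤ, ∀ v ∈ A, v ∈ V.odd → V.G k v ∈ A := by
    intro k v hv hvo
    rw [hmemA] at hv ⊢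
    constructor
    · intro m
      have e := tw.actG_odd k v hvo (F.x m)
      rw [F.act_Gx] at e
      have e2 : tw.t (V.G k v) (F.x m)
          = T.G k (tw.t v (F.x m)) + tw.t v (F.y (k+m)) := by
        rw [e]; abel
      rw [e2, map_add, hχG, hv.1 m, map_zero, hv.2 (k+m), add_zero]
    · intro m
      have e := tw.actG_odd k v hvo (F.y m)
      rw [F.act_Gy, map_smul] at e
      have e2 : tw.t (V.G k v) (F.y m)
          = T.G k (tw.t v (F.y m))
            + (a + 1/2 + (m:ℂ) + (2*(k:ℂ)+1)*(b-1/2)) • tw.t v (F.x (k+m+1)) := by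
        rw [e]; abel
      rw [e2, map_add, hχG, hv.2 m, map_zero, map_smul, hv.1 (k+m+1), smul_zero, add_zero]
  set W : Submodule ℂ V.carrier := (A ⊓ V.even) ⊔ (A ⊓ V.odd) with hW
  have hWsub : V.IsSubmodule W := by
    constructor
    · intro k v hv
      rcases Submodule.mem_sup.mp hv with ⟨v1, hv1, v2, hv2, rfl⟩
      rw [map_add]
      exact add_mem
        (Submodule.mem_sup_left ⟨hAL k v1 hv1.1, V.mapsL_even k v1 hv1.2⟩)
        (Submodule.mem_sup_right ⟨hAL k v2 hv2.1, V.mapsL_odd k v2 hv2.2⟩)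
    · intro k v hv
      rcases Submodule.mem_sup.mp hv with ⟨v1, hv1, v2, hv2, rfl⟩
      rw [map_add]
      exact add_mem
        (Submodule.mem_sup_right ⟨hAGe k v1 hv1.1 hv1.2, V.mapsG_even k v1 hv1.2⟩)
        (Submodule.mem_sup_left ⟨hAGo k v2 hv2.1 hv2.2, V.mapsG_odd k v2 hv2.2⟩)
  have hWtop : W = ⊤ := by
    refine hu.gen W hWsub ?_
    exact Submodule.mem_sup_left ⟨⟨hx, hy⟩, hu.mem_even⟩
  have hAll : ∀ v : V.carrier,
      (∀ m : ℤ, χ (tw.t v (F.x m)) = 0) ∧ (∀ m : ℤ, χ (tw.t v (F.y m)) = 0) := by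
    intro v
    have hvW : v ∈ W := by rw [hWtop]; trivial
    rcases Submodule.mem_sup.mp hvW with ⟨v1, hv1, v2, hv2, rfl⟩
    have h1 := (hmemA v1).mp hv1.1
    have h2 := (hmemA v2).mp hv2.1
    constructor <;> intro m <;>
      simp [map_add, LinearMap.add_apply, h1.1 m, h1.2 m, h2.1 m, h2.2 m]
  intro z
  refine span_top_elim (F := F) (tw := tw) (P := fun z => χ z = 0) ?_ ?_ ?_ ?_ ?_ z
  · simp
  · intro z₁ z₂ h1 h2
    rw [map_add, h1, h2, add_zero]
  · intro r z h1
    rw [map_smul, h1, smul_zero]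
  · intro v i
    exact (hAll v).1 i
  · intro v i
    exact (hAll v).2 i

end GenZero

end NSProof

open NSProof


/-- Theorem 2.2: every linear endomorphism of
`V ⊗ SA'_{a,b}` commuting with all operators `L_m` and `G_r` is a scalar,
i.e. `End(V ⊗ SA'_{a,b}) ≅ ℂ`; in particular `V ⊗ SA'_{a,b}` is
indecomposable. -/
theorem tensor_endomorphisms_scalar (a b c h : ℂ)
    (ha0 : 0 ≤ a.re) (ha1 : a.re < 1) (hb : b ≠ 1)
    (V : NSMod c) (u : V.carrier) (hu : IsHW h V u)
    (S : NSMod 0) (F : SA'Family a b S)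
    (T : NSMod c) (tw : TensorWitness V S T) :
    (∀ φ : T.carrier →ₗ[ℂ] T.carrier,
      (∀ (m : ℤ) (v : T.carrier), φ (T.L m v) = T.L m (φ v)) →
      (∀ (k : ℤ) (v : T.carrier), φ (T.G k v) = T.G k (φ v)) →
      ∃ z : ℂ, φ = z • (LinearMap.id : T.carrier →ₗ[ℂ] T.carrier)) ∧
    (∀ W W' : Submodule ℂ T.carrier, T.IsSubmodule W → T.IsSubmodule W' →
      IsCompl W W' → W = ⊥ ∨ W' = ⊥) := by
  classical
  obtain ⟨C⟩ := exists_coordSys F tw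
  have hX0 : tw.t u (F.x 0) ≠ 0 := by
    intro h0
    apply hu.ne_zero
    have h1 := congrArg (C.cX 0) h0
    rwa [C.cX_tx, if_pos rfl, map_zero] at h1
  have part1 : ∀ φ : T.carrier →ₗ[ℂ] T.carrier,
      (∀ (m : ℤ) (v : T.carrier), φ (T.L m v) = T.L m (φ v)) →
      (∀ (k : ℤ) (v : T.carrier), φ (T.G k v) = T.G k (φ v)) →
      ∃ z : ℂ, φ = z • (LinearMap.id : T.carrier →ₗ[ℂ] T.carrier) := by
    intro φ hφL hφG
    set φ₀ : T.carrier →ₗ[ℂ] T.carrier :=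
      (Pe T).comp (φ.comp (Pe T)) + (Po T).comp (φ.comp (Po T)) with hφ₀def
    set φ₁ : T.carrier →ₗ[ℂ] T.carrier :=
      (Pe T).comp (φ.comp (Po T)) + (Po T).comp (φ.comp (Pe T)) with hφ₁def
    have hφ₀L : ∀ (k : ℤ) (z : T.carrier), φ₀ (T.L k z) = T.L k (φ₀ z) := by
      intro k z
      show Pe T (φ (Pe T (T.L k z))) + Po T (φ (Po T (T.L k z)))
          = T.L k (Pe T (φ (Pe T z)) + Po T (φ (Po T z)))
      rw [Pe_L, Po_L, hφL, hφL, Pe_L, Po_L, map_add]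
    have hφ₀G : ∀ (k : ℤ) (z : T.carrier), φ₀ (T.G k z) = T.G k (φ₀ z) := by
      intro k z
      show Pe T (φ (Pe T (T.G k z))) + Po T (φ (Po T (T.G k z)))
          = T.G k (Pe T (φ (Pe T z)) + Po T (φ (Po T z)))
      rw [Pe_G, Po_G, hφG, hφG, Pe_G, Po_G, map_add]
      abel
    have hφ₀e : ∀ z ∈ T.even, φ₀ z ∈ T.even := by
      intro z hz
      have he : φ₀ z = Pe T (φ (Pe T z)) := by
        show Pe T (φ (Pe T z)) + Po T (φ (Po T z)) = _
        rw [Po_eq_zero hz, map_zero, map_zero, add_zero]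
      rw [he]
      exact Pe_mem _
    have hφ₀o : ∀ z ∈ T.odd, φ₀ z ∈ T.odd := by
      intro z hz
      have he : φ₀ z = Po T (φ (Po T z)) := by
        show Pe T (φ (Pe T z)) + Po T (φ (Po T z)) = _
        rw [Pe_eq_zero hz, map_zero, map_zero, zero_add]
      rw [he]
      exact Po_mem _
    have hφ₁L : ∀ (k : ℤ) (z : T.carrier), φ₁ (T.L k z) = T.L k (φ₁ z) := by
      intro k z
      show Pe T (φ (Po T (T.L k z))) + Po T (φ (Pe T (T.L k z)))
          = T.L k (Pe T (φ (Po T z)) + Po T (φ (Pe T z)))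
      rw [Pe_L, Po_L, hφL, hφL, Pe_L, Po_L, map_add]
    have hφ₁G : ∀ (k : ℤ) (z : T.carrier), φ₁ (T.G k z) = T.G k (φ₁ z) := by
      intro k z
      show Pe T (φ (Po T (T.G k z))) + Po T (φ (Pe T (T.G k z)))
          = T.G k (Pe T (φ (Po T z)) + Po T (φ (Pe T z)))
      rw [Pe_G, Po_G, hφG, hφG, Pe_G, Po_G, map_add]
      abel
    have hφ₁eo : ∀ z ∈ T.even, φ₁ z ∈ T.odd := by
      intro z hz
      have he : φ₁ z = Po T (φ (Pe T z)) := by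
        show Pe T (φ (Po T z)) + Po T (φ (Pe T z)) = _
        rw [Po_eq_zero hz, map_zero, map_zero, zero_add]
      rw [he]
      exact Po_mem _
    have hφ₁oe : ∀ z ∈ T.odd, φ₁ z ∈ T.even := by
      intro z hz
      have he : φ₁ z = Pe T (φ (Po T z)) := by
        show Pe T (φ (Po T z)) + Po T (φ (Pe T z)) = _
        rw [Pe_eq_zero hz, map_zero, map_zero, add_zero]
      rw [he]
      exact Pe_mem _
    obtain ⟨z, hzx, hzy⟩ := psi_scalar C ha0 ha1 hb hu hφ₀L hφ₀G hφ₀e hφ₀o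
    obtain ⟨h1x, h1y⟩ := psi_rev_zero C ha0 ha1 hu hφ₁L hφ₁eo hφ₁oe
    have hsum : ∀ w : T.carrier, φ w = φ₀ w + φ₁ w := by
      intro w
      have hmain : φ w = φ (Pe T w) + φ (Po T w) := by rw [← map_add, ← proj_sum]
      rw [hmain]
      show _ = (Pe T (φ (Pe T w)) + Po T (φ (Po T w)))
          + (Pe T (φ (Po T w)) + Po T (φ (Pe T w)))
      nth_rewrite 1 [proj_sum (φ (Pe T w))]
      nth_rewrite 1 [proj_sum (φ (Po T w))]
      abel
    refine ⟨z, ?_⟩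
    set χ : T.carrier →ₗ[ℂ] T.carrier := φ - z • (LinearMap.id : T.carrier →ₗ[ℂ] T.carrier)
      with hχdef
    have hχL : ∀ (k : ℤ) (w : T.carrier),
        χ (T.L k w) = T.L k (χ w) := by
      intro k w
      simp only [hχdef, LinearMap.sub_apply, LinearMap.smul_apply, LinearMap.id_apply,
        map_sub, map_smul, hφL]
    have hχG : ∀ (k : ℤ) (w : T.carrier),
        χ (T.G k w) = T.G k (χ w) := by
      intro k w
      simp only [hχdef, LinearMap.sub_apply, LinearMap.smul_apply, LinearMap.id_apply,
        map_sub, map_smul, hφG]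
    have hgx : ∀ m : ℤ, χ (tw.t u (F.x m)) = 0 := by
      intro m
      simp only [hχdef, LinearMap.sub_apply, LinearMap.smul_apply, LinearMap.id_apply]
      rw [hsum, hzx m, h1x m, add_zero, sub_self]
    have hgy : ∀ m : ℤ, χ (tw.t u (F.y m)) = 0 := by
      intro m
      simp only [hχdef, LinearMap.sub_apply, LinearMap.smul_apply, LinearMap.id_apply]
      rw [hsum, hzy m, h1y m, add_zero, sub_self]
    have hzero := gen_zero hu hχL hχG hgx hgy
    ext w
    have hw := hzero w
    simp only [hχdef, LinearMap.sub_apply, LinearMap.smul_apply, LinearMap.id_apply] at hw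
    have := sub_eq_zero.mp hw
    simpa using this
  refine ⟨part1, ?_⟩
  intro W W' hWs hW's hcompl
  set π : T.carrier →ₗ[ℂ] T.carrier := W.subtype.comp (W.projectionOnto W' hcompl)
    with hπdef
  have hπdec : ∀ z z1 z2 : T.carrier, z1 ∈ W → z2 ∈ W' → z = z1 + z2 → π z = z1 := by
    intro z z1 z2 h1 h2 hz
    show W.subtype (W.projectionOnto W' hcompl z) = z1
    rw [hz, map_add,
      show z1 = ((⟨z1, h1⟩ : W) : T.carrier) from rfl,
      Submodule.linearProjOfIsCompl_apply_left,
      Submodule.linearProjOfIsCompl_apply_right hcompl ⟨z2, h2⟩]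
    simp
  have hπW : ∀ z ∈ W, π z = z := fun z hz => hπdec z z 0 hz (Submodule.zero_mem _) (by simp)
  have hπW' : ∀ z ∈ W', π z = 0 := fun z hz =>
    hπdec z 0 z (Submodule.zero_mem _) hz (by simp)
  have hπmem : ∀ z : T.carrier, π z ∈ W := fun z => (W.linearProjOfIsCompl W' hcompl z).2
  have hπL : ∀ (k : ℤ) (z : T.carrier), π (T.L k z) = T.L k (π z) := by
    intro k z
    obtain ⟨z1, z2, h1, h2, hz⟩ := Submodule.codisjoint_iff_exists_add_eq.mp hcompl.codisjoint z
    rw [hπdec z z1 z2 h1 h2 hz.symm, ← hz, map_add]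
    exact hπdec _ (T.L k z1) (T.L k z2) (hWs.1 k z1 h1) (hW's.1 k z2 h2) rfl
  have hπG : ∀ (k : ℤ) (z : T.carrier), π (T.G k z) = T.G k (π z) := by
    intro k z
    obtain ⟨z1, z2, h1, h2, hz⟩ := Submodule.codisjoint_iff_exists_add_eq.mp hcompl.codisjoint z
    rw [hπdec z z1 z2 h1 h2 hz.symm, ← hz, map_add]
    exact hπdec _ (T.G k z1) (T.G k z2) (hWs.2 k z1 h1) (hW's.2 k z2 h2) rfl
  obtain ⟨zπ, hzπ⟩ := part1 π hπL hπG
  have happly : ∀ z : T.carrier, π z = zπ • z := by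
    intro z
    rw [hzπ]
    simp
  have hidem : zπ * zπ = zπ := by
    have h1 : π (π (tw.t u (F.x 0))) = π (tw.t u (F.x 0)) := hπW _ (hπmem _)
    rw [happly, happly] at h1
    have h2 : (zπ * zπ - zπ) • tw.t u (F.x 0) = 0 := by
      rw [sub_smul, mul_smul, h1, sub_self]
    rcases smul_eq_zero.mp h2 with hc | hc
    · linear_combination hc
    · exact absurd hc hX0
  have hzor : zπ = 0 ∨ zπ = 1 := by
    rcases mul_eq_zero.mp (show zπ * (zπ - 1) = 0 from by linear_combination hidem) with hc | hc
    · exact Or.inl hc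
    · exact Or.inr (by linear_combination hc)
  rcases hzor with hc | hc
  · left
    rw [eq_bot_iff]
    intro w hw
    have h1 : π w = w := hπW w hw
    rw [happly, hc, zero_smul] at h1
    simp [← h1]
  · right
    rw [eq_bot_iff]
    intro w hw
    have h1 : π w = 0 := hπW' w hw
    rw [happly, hc, one_smul] at h1
    simp [h1]
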